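/- arXiv:1811.04004 — 7 statements merged into one kernel-verified Lean document; each statement's English description precedes it below -/
import Mathlib

section
/- Let P_0, P_1 be real symmetric positive definite d×d matrices, P(s) = s P_0 + (1−s) P_1, and let n_1,…,n_{2k} ∈ {1,…,d}. Then for every s ∈ (0,1), (d/ds)[ ΣΠ_{(n_1,…,n_{2k})}(P(s)^{−1}) / √(det P(s)) ] = −(1/2) Σ_{m,l=1}^d ΣΠ_{(n_1,…,n_{2k},m,l)}(P(s)^{−1}) · (P_0 − P_1)_{ml} / √(det P(s)). -/
open MeasureTheory

/-- Sum over all pairings of `{0, …, m−1}` (encoded as fixed-point-free involutions)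
of the product over blocks `{i, σ i}` (with `i < σ i`) of the entries `M (nv i) (nv (σ i))`. -/
noncomputable def sumPairings {d m : ℕ} (nv : Fin m → Fin d)
    (M : Matrix (Fin d) (Fin d) ℝ) : ℝ :=
  ∑ σ : Equiv.Perm (Fin m),
    if (∀ i, σ (σ i) = i) ∧ (∀ i, σ i ≠ i) then
      ∏ i ∈ Finset.univ.filter fun i => i < σ i, M (nv i) (nv (σ i))
    else 0

open Finset Equiv

namespace SPaux

variable {n : ℕ}

abbrev isPair {m : ℕ} (σ : Equiv.Perm (Fin m)) : Prop :=
  (∀ i, σ (σ i) = i) ∧ (∀ i, σ i ≠ i)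

def eI (i : Fin n) : Fin (n + 2) := finSumFinEquiv (Sum.inl i)
def pe : Fin (n + 2) := finSumFinEquiv (Sum.inr 0)
def la : Fin (n + 2) := finSumFinEquiv (Sum.inr 1)

@[simp] lemma eI_val (i : Fin n) : (eI i).val = i.val := rfl
@[simp] lemma pe_val : (pe : Fin (n + 2)).val = n := by simp [pe]
@[simp] lemma la_val : (la : Fin (n + 2)).val = n + 1 := by simp [la]

lemma eI_inj {i j : Fin n} (h : eI i = eI j) : i = j := by
  apply Fin.ext; have := congrArg Fin.val h; simpa using this

lemma eI_ne_pe (i : Fin n) : eI i ≠ pe := by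
  intro h; have := congrArg Fin.val h; simp at this; omega

lemma eI_ne_la (i : Fin n) : eI i ≠ la := by
  intro h; have := congrArg Fin.val h; simp at this; omega

lemma pe_ne_la : (pe : Fin (n+2)) ≠ la := by
  intro h; have := congrArg Fin.val h; simp at this

lemma eI_lt_pe (i : Fin n) : eI i < pe := by
  simp only [Fin.lt_def, eI_val, pe_val]; exact i.2

lemma eI_lt_la (i : Fin n) : eI i < la := by
  simp only [Fin.lt_def, eI_val, la_val]; omega

lemma pe_lt_la : (pe : Fin (n+2)) < la := by
  simp only [Fin.lt_def, pe_val, la_val]; omega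

lemma eI_lt_eI {i j : Fin n} : eI i < eI j ↔ i < j := by
  rw [Fin.lt_def, eI_val, eI_val, ← Fin.lt_def]

lemma not_pe_lt_eI (i : Fin n) : ¬ (pe : Fin (n+2)) < eI i := by
  simp only [Fin.lt_def, pe_val, eI_val, not_lt]; exact le_of_lt i.2

lemma not_la_lt_eI (i : Fin n) : ¬ (la : Fin (n+2)) < eI i := by
  simp only [Fin.lt_def, la_val, eI_val, not_lt]; omega

lemma not_la_lt_pe : ¬ (la : Fin (n+2)) < pe := by
  simp only [Fin.lt_def, la_val, pe_val, not_lt]; omega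

lemma cases3 (x : Fin (n + 2)) : (∃ i : Fin n, x = eI i) ∨ x = pe ∨ x = la := by
  obtain ⟨v, hv⟩ := x
  rcases lt_trichotomy v n with h | h | h
  · exact Or.inl ⟨⟨v, h⟩, Fin.ext (by simp)⟩
  · exact Or.inr (Or.inl (Fin.ext (by simp [h])))
  · have : v = n + 1 := by omega
    exact Or.inr (Or.inr (Fin.ext (by simp [this])))

/-- extend a permutation of `Fin n` to `Fin (n+2)` pairing the two extra points. -/
def i1 (σ : Equiv.Perm (Fin n)) : Equiv.Perm (Fin (n + 2)) :=
  finSumFinEquiv.permCongr (Equiv.sumCongr σ (Equiv.swap 0 1))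

@[simp] lemma i1_eI (σ : Equiv.Perm (Fin n)) (i : Fin n) : i1 σ (eI i) = eI (σ i) := by
  simp [i1, eI]

@[simp] lemma i1_pe (σ : Equiv.Perm (Fin n)) : i1 σ pe = la := by
  simp [i1, pe, la]

@[simp] lemma i1_la (σ : Equiv.Perm (Fin n)) : i1 σ la = pe := by
  simp [i1, pe, la, Equiv.swap_apply_right]

lemma i1_pair {σ : Equiv.Perm (Fin n)} (hσ : isPair σ) : isPair (i1 σ) := by
  constructor
  · intro x
    rcases cases3 x with ⟨i, rfl⟩ | rfl | rfl <;> simp [hσ.1]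
  · intro x
    rcases cases3 x with ⟨i, rfl⟩ | rfl | rfl
    · simp only [i1_eI]; exact fun h => hσ.2 i (eI_inj h)
    · simp only [i1_pe]; exact fun h => pe_ne_la h.symm
    · simp only [i1_la]; exact fun h => pe_ne_la h

lemma i1_inj {σ σ' : Equiv.Perm (Fin n)} (h : i1 σ = i1 σ') : σ = σ' := by
  ext i
  have := congrArg (fun τ : Equiv.Perm (Fin (n+2)) => τ (eI i)) h
  simp only [i1_eI] at this
  exact congrArg Fin.val (eI_inj this)

lemma i1_surj {τ : Equiv.Perm (Fin (n + 2))} (hτ : isPair τ) (hla : τ la = pe) :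
    ∃ σ : Equiv.Perm (Fin n), isPair σ ∧ i1 σ = τ := by
  have hpe : τ pe = la := by rw [← hla, hτ.1]
  have hval : ∀ i : Fin n, (τ (eI i)).val < n := by
    intro i
    rcases cases3 (τ (eI i)) with ⟨j, hj⟩ | h | h
    · rw [hj]; simpa using j.2
    · exfalso
      have : τ (τ (eI i)) = τ pe := by rw [h]
      rw [hτ.1, hpe] at this
      exact eI_ne_la i this
    · exfalso
      have : τ (τ (eI i)) = τ la := by rw [h]
      rw [hτ.1, hla] at this
      exact eI_ne_pe i this
  set σ0 : Fin n → Fin n := fun i => ⟨(τ (eI i)).val, hval i⟩ with hσ0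
  have key : ∀ i, eI (σ0 i) = τ (eI i) := fun i => Fin.ext (by simp [hσ0])
  have invol : ∀ i, σ0 (σ0 i) = i := by
    intro i
    apply Fin.ext
    have : eI (σ0 (σ0 i)) = eI i := by rw [key, key, hτ.1]
    simpa using congrArg Fin.val this
  refine ⟨⟨σ0, σ0, invol, invol⟩, ⟨invol, ?_⟩, ?_⟩
  · intro i h
    have : τ (eI i) = eI i := by rw [← key]; exact congrArg eI h
    exact hτ.2 (eI i) this
  · ext x
    rcases cases3 x with ⟨i, rfl⟩ | rfl | rfl
    · simp only [i1_eI]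
      exact congrArg Fin.val (key i)
    · simp only [i1_pe]; exact congrArg Fin.val hpe.symm
    · simp only [i1_la]; exact congrArg Fin.val hla.symm

/-- Case-2 extension: conjugate `i1 σ` by the swap of `eI i` and `la`. -/
def i2 (σ : Equiv.Perm (Fin n)) (i : Fin n) : Equiv.Perm (Fin (n + 2)) :=
  Equiv.swap (eI i) la * i1 σ * Equiv.swap (eI i) la

lemma i2_apply (σ : Equiv.Perm (Fin n)) (i : Fin n) (x : Fin (n+2)) :
    i2 σ i x = Equiv.swap (eI i) la (i1 σ (Equiv.swap (eI i) la x)) := rfl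

lemma conj_pair {τ : Equiv.Perm (Fin (n+2))} (c : Equiv.Perm (Fin (n+2)))
    (hc : ∀ x, c (c x) = x) (hτ : isPair τ) : isPair (c * τ * c) := by
  constructor
  · intro x; simp only [Equiv.Perm.mul_apply]; rw [hc, hτ.1, hc]
  · intro x h
    simp only [Equiv.Perm.mul_apply] at h
    have := congrArg c h
    rw [hc] at this
    exact hτ.2 (c x) this

lemma i2_pair {σ : Equiv.Perm (Fin n)} (hσ : isPair σ) (i : Fin n) : isPair (i2 σ i) :=
  conj_pair _ (fun x => Equiv.swap_apply_self _ _ x) (i1_pair hσ)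

lemma i2_eI_of_ne {σ : Equiv.Perm (Fin n)} (hσ : isPair σ) {i j : Fin n}
    (h1 : j ≠ i) (h2 : j ≠ σ i) : i2 σ i (eI j) = eI (σ j) := by
  rw [i2_apply]
  rw [Equiv.swap_apply_of_ne_of_ne (fun h => h1 (eI_inj h)) (eI_ne_la j), i1_eI]
  refine Equiv.swap_apply_of_ne_of_ne (fun h => ?_) (eI_ne_la _)
  have : σ j = i := eI_inj h
  exact h2 (by rw [← this, hσ.1])

lemma i2_eI_self {σ : Equiv.Perm (Fin n)} (i : Fin n) : i2 σ i (eI i) = pe := by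
  rw [i2_apply, Equiv.swap_apply_left, i1_la]
  exact Equiv.swap_apply_of_ne_of_ne (Ne.symm (eI_ne_pe i)) pe_ne_la

lemma i2_eI_sigma {σ : Equiv.Perm (Fin n)} (hσ : isPair σ) (i : Fin n) :
    i2 σ i (eI (σ i)) = la := by
  rw [i2_apply]
  rw [Equiv.swap_apply_of_ne_of_ne (fun h => hσ.2 i (eI_inj h)) (eI_ne_la _),
    i1_eI, hσ.1, Equiv.swap_apply_left]

lemma i2_pe {σ : Equiv.Perm (Fin n)} (i : Fin n) : i2 σ i pe = eI i := by
  rw [i2_apply, Equiv.swap_apply_of_ne_of_ne (Ne.symm (eI_ne_pe i)) pe_ne_la,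
    i1_pe, Equiv.swap_apply_right]

lemma i2_la {σ : Equiv.Perm (Fin n)} (hσ : isPair σ) (i : Fin n) : i2 σ i la = eI (σ i) := by
  rw [i2_apply, Equiv.swap_apply_right, i1_eI]
  exact Equiv.swap_apply_of_ne_of_ne (fun h => hσ.2 i (eI_inj h)) (eI_ne_la _)

lemma i2_la_ne_pe {σ : Equiv.Perm (Fin n)} (hσ : isPair σ) (i : Fin n) :
    i2 σ i la ≠ pe := by
  rw [i2_la hσ]; exact eI_ne_pe _

lemma i2_inj {σ σ' : Equiv.Perm (Fin n)} {i i' : Fin n}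
    (h : i2 σ i = i2 σ' i') : σ = σ' ∧ i = i' := by
  have hi : i = i' := by
    have := congrArg (fun τ : Equiv.Perm (Fin (n+2)) => τ pe) h
    simp only [i2_pe] at this
    exact eI_inj this
  subst hi
  refine ⟨i1_inj ?_, rfl⟩
  rw [i2, i2, mul_assoc, mul_assoc] at h
  exact mul_right_cancel (mul_left_cancel h)

lemma i2_surj {τ : Equiv.Perm (Fin (n + 2))} (hτ : isPair τ) (hne : τ la ≠ pe) :
    ∃ σ : Equiv.Perm (Fin n), isPair σ ∧ ∃ i : Fin n, i2 σ i = τ := by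
  have hxla : τ pe ≠ la := by
    intro h
    have : τ la = pe := by rw [← h, hτ.1]
    exact hne this
  have hxpe : τ pe ≠ pe := hτ.2 pe
  obtain ⟨i, hi⟩ : ∃ i : Fin n, τ pe = eI i := by
    rcases cases3 (τ pe) with ⟨i, h⟩ | h | h
    · exact ⟨i, h⟩
    · exact absurd h hxpe
    · exact absurd h hxla
  set c : Equiv.Perm (Fin (n+2)) := Equiv.swap (eI i) la with hc
  have hcc : ∀ x, c (c x) = x := fun x => Equiv.swap_apply_self _ _ x
  have hτ' : isPair (c * τ * c) := conj_pair c hcc hτ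
  have hla' : (c * τ * c) la = pe := by
    simp only [Equiv.Perm.mul_apply, hc, Equiv.swap_apply_right]
    have : τ (eI i) = pe := by rw [← hi, hτ.1]
    rw [this]
    exact Equiv.swap_apply_of_ne_of_ne (Ne.symm (eI_ne_pe i)) pe_ne_la
  obtain ⟨σ, hσ, hiσ⟩ := i1_surj hτ' hla'
  refine ⟨σ, hσ, i, ?_⟩
  have : i2 σ i = c * (c * τ * c) * c := by rw [i2, hiσ]
  rw [this]
  ext x
  simp [Equiv.Perm.mul_apply, hcc]



lemma prod_split (g : Fin (n + 2) → ℝ) :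
    ∏ x, g x = (∏ i : Fin n, g (eI i)) * (g pe * g la) := by
  rw [← Equiv.prod_comp finSumFinEquiv g, Fintype.prod_sum_type, Fin.prod_univ_two]
  rfl

lemma A_prod {σ : Equiv.Perm (Fin n)} (F : Fin (n+2) → Fin (n+2) → ℝ) :
    (∏ x ∈ univ.filter fun x => x < i1 σ x, F x (i1 σ x))
      = (∏ j ∈ univ.filter fun j => j < σ j, F (eI j) (eI (σ j))) * F pe la := by
  rw [Finset.prod_filter, prod_split]
  congr 1
  · rw [Finset.prod_filter]
    apply Finset.prod_congr rfl
    intro j _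
    rw [i1_eI]
    by_cases h : j < σ j
    · rw [if_pos (eI_lt_eI.mpr h), if_pos h]
    · rw [if_neg (fun hc => h (eI_lt_eI.mp hc)), if_neg h]
  · rw [i1_pe, i1_la, if_pos pe_lt_la, if_neg not_la_lt_pe, mul_one]

lemma B_prod {σ : Equiv.Perm (Fin n)} (hσ : isPair σ) (i : Fin n)
    (F : Fin (n+2) → Fin (n+2) → ℝ) :
    (∏ x ∈ univ.filter fun x => x < i2 σ i x, F x (i2 σ i x))
      = F (eI i) pe * (F (eI (σ i)) la *
          ∏ j ∈ ((univ.filter fun j => j < σ j).erase i).erase (σ i),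
            F (eI j) (eI (σ j))) := by
  rw [Finset.prod_filter, prod_split]
  rw [i2_pe, i2_la hσ, if_neg (not_pe_lt_eI i), if_neg (not_la_lt_eI (σ i)), mul_one, mul_one]
  have step : ∀ j : Fin n, (if eI j < i2 σ i (eI j) then F (eI j) (i2 σ i (eI j)) else 1)
      = if j = i then F (eI i) pe else if j = σ i then F (eI (σ i)) la
        else if j < σ j then F (eI j) (eI (σ j)) else 1 := by
    intro j
    by_cases h1 : j = i
    · subst h1; rw [i2_eI_self, if_pos (eI_lt_pe j), if_pos rfl]
    · by_cases h2 : j = σ i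
      · subst h2
        rw [i2_eI_sigma hσ, if_pos (eI_lt_la _), if_neg h1, if_pos rfl]
      · rw [i2_eI_of_ne hσ h1 h2, if_neg h1, if_neg h2]
        by_cases h : j < σ j
        · rw [if_pos (eI_lt_eI.mpr h), if_pos h]
        · rw [if_neg (fun hc => h (eI_lt_eI.mp hc)), if_neg h]
  rw [Finset.prod_congr rfl (fun j _ => step j)]
  rw [← Finset.mul_prod_erase Finset.univ _ (Finset.mem_univ i),
      ← Finset.mul_prod_erase _ _ (Finset.mem_erase.mpr ⟨hσ.2 i, Finset.mem_univ (σ i)⟩)]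
  rw [if_pos rfl, if_neg (hσ.2 i), if_pos rfl]
  congr 2
  have hset : ((Finset.univ.erase i).erase (σ i)).filter (fun j => j < σ j)
      = ((Finset.univ.filter fun j => j < σ j).erase i).erase (σ i) := by
    ext j
    simp only [Finset.mem_filter, Finset.mem_erase, Finset.mem_univ, true_and, and_true]
    tauto
  rw [← hset, Finset.prod_filter]
  apply Finset.prod_congr rfl
  intro j hj
  rw [Finset.mem_erase, Finset.mem_erase] at hj
  rw [if_neg hj.2.1, if_neg hj.1]

section Matrices

variable {d : ℕ} (M Q : Matrix (Fin d) (Fin d) ℝ)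

lemma contractMQM (hM : ∀ a b, M a b = M b a) (a b : Fin d) :
    ∑ mm : Fin d, ∑ ll : Fin d, (M a mm * M b ll) * Q mm ll = (M * Q * M) a b := by
  have h1 : (M * Q * M) a b = ∑ j, (∑ mm, M a mm * Q mm j) * M j b := by
    rw [Matrix.mul_apply]
    apply Finset.sum_congr rfl
    intro j _
    rw [Matrix.mul_apply]
  rw [h1]
  simp only [Finset.sum_mul]
  rw [Finset.sum_comm]
  apply Finset.sum_congr rfl; intro mm _
  apply Finset.sum_congr rfl; intro ll _
  rw [hM b mm]; ring

lemma MQMsymm (hM : ∀ a b, M a b = M b a) (hQ : ∀ a b, Q a b = Q b a) (a b : Fin d) :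
    (M * Q * M) a b = (M * Q * M) b a := by
  rw [← contractMQM M Q hM a b, ← contractMQM M Q hM b a]
  rw [Finset.sum_comm]
  apply Finset.sum_congr rfl; intro mm _
  apply Finset.sum_congr rfl; intro ll _
  rw [hQ ll mm]; ring

lemma snoc_eI {d : ℕ} (nv : Fin n → Fin d) (mm ll : Fin d) (j : Fin n) :
    (Fin.snoc (Fin.snoc nv mm) ll : Fin (n+1+1) → Fin d) (eI j) = nv j := by
  have h : eI j = Fin.castSucc (Fin.castSucc j) := Fin.ext (by simp)
  rw [h, Fin.snoc_castSucc, Fin.snoc_castSucc]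

lemma snoc_pe {d : ℕ} (nv : Fin n → Fin d) (mm ll : Fin d) :
    (Fin.snoc (Fin.snoc nv mm) ll : Fin (n+1+1) → Fin d) (pe : Fin (n+2)) = mm := by
  have h : (pe : Fin (n+2)) = Fin.castSucc (Fin.last n) := Fin.ext (by simp)
  rw [h, Fin.snoc_castSucc, Fin.snoc_last]

lemma snoc_la {d : ℕ} (nv : Fin n → Fin d) (mm ll : Fin d) :
    (Fin.snoc (Fin.snoc nv mm) ll : Fin (n+1+1) → Fin d) (la : Fin (n+2)) = ll := by
  have h : (la : Fin (n+2)) = Fin.last (n+1) := Fin.ext (by simp)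
  rw [h, Fin.snoc_last]

lemma comb {d : ℕ} (M Q : Matrix (Fin d) (Fin d) ℝ) (nv : Fin n → Fin d)
    (hM : ∀ a b, M a b = M b a) (hQ : ∀ a b, Q a b = Q b a) :
    ∑ mm : Fin d, ∑ ll : Fin d, sumPairings (Fin.snoc (Fin.snoc nv mm) ll) M * Q mm ll
    = sumPairings nv M * (∑ mm : Fin d, ∑ ll : Fin d, M mm ll * Q mm ll)
      + 2 * ∑ σ : Equiv.Perm (Fin n), (if (∀ i, σ (σ i) = i) ∧ (∀ i, σ i ≠ i) then
          ∑ i ∈ Finset.univ.filter (fun i => i < σ i),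
            (∏ j ∈ (Finset.univ.filter fun j => j < σ j).erase i, M (nv j) (nv (σ j)))
              * ((M * Q * M) (nv i) (nv (σ i)))
        else 0) := by
  classical
  set S : ℝ := ∑ mm : Fin d, ∑ ll : Fin d, M mm ll * Q mm ll with hS
  set T2 : Finset (Equiv.Perm (Fin (n+2))) := Finset.univ.filter (fun τ => isPair τ) with hT2
  set Tn : Finset (Equiv.Perm (Fin n)) := Finset.univ.filter (fun σ => isPair σ) with hTn
  -- the per-τ inner double sum
  set G : Equiv.Perm (Fin (n+2)) → ℝ := fun τ =>
    ∑ mm : Fin d, ∑ ll : Fin d,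
      (∏ x ∈ Finset.univ.filter fun x => x < τ x,
        M ((Fin.snoc (Fin.snoc nv mm) ll : Fin (n+1+1) → Fin d) x) ((Fin.snoc (Fin.snoc nv mm) ll : Fin (n+1+1) → Fin d) (τ x))) * Q mm ll
    with hG
  have lhs1 : ∀ mm ll : Fin d,
      sumPairings (Fin.snoc (Fin.snoc nv mm) ll) M
      = ∑ τ ∈ T2, ∏ x ∈ Finset.univ.filter fun x => x < τ x,
          M ((Fin.snoc (Fin.snoc nv mm) ll : Fin (n+1+1) → Fin d) x) ((Fin.snoc (Fin.snoc nv mm) ll : Fin (n+1+1) → Fin d) (τ x)) := by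
    intro mm ll
    unfold sumPairings
    exact (Finset.sum_filter _ _).symm
  have spn : sumPairings nv M
      = ∑ σ ∈ Tn, ∏ i ∈ Finset.univ.filter fun i => i < σ i, M (nv i) (nv (σ i)) := by
    unfold sumPairings
    exact (Finset.sum_filter _ _).symm
  have step1 : ∑ mm : Fin d, ∑ ll : Fin d,
      sumPairings (Fin.snoc (Fin.snoc nv mm) ll) M * Q mm ll = ∑ τ ∈ T2, G τ := by
    simp only [lhs1, Finset.sum_mul]
    calc (∑ mm : Fin d, ∑ ll : Fin d, ∑ τ ∈ T2, _ * Q mm ll)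
        = ∑ mm : Fin d, ∑ τ ∈ T2, ∑ ll : Fin d, _ * Q mm ll :=
          Finset.sum_congr rfl (fun mm _ => Finset.sum_comm)
      _ = ∑ τ ∈ T2, ∑ mm : Fin d, ∑ ll : Fin d, _ * Q mm ll := Finset.sum_comm
  rw [step1]
  rw [← Finset.sum_filter_add_sum_filter_not T2 (fun τ => τ la = pe) G]
  -- Case A
  have caseA : ∑ τ ∈ T2.filter (fun τ => τ la = pe), G τ
      = sumPairings nv M * S := by
    rw [spn, Finset.sum_mul]
    refine (Finset.sum_bij (fun σ _ => i1 σ) ?_ ?_ ?_ ?_).symm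
    · intro σ hσ
      rw [hTn, Finset.mem_filter] at hσ
      rw [Finset.mem_filter, hT2, Finset.mem_filter]
      exact ⟨⟨Finset.mem_univ _, i1_pair hσ.2⟩, i1_la σ⟩
    · intro σ1 _ σ2 _ h
      exact i1_inj h
    · intro τ hτ
      rw [Finset.mem_filter, hT2, Finset.mem_filter] at hτ
      obtain ⟨σ, hσ, rfl⟩ := i1_surj hτ.1.2 hτ.2
      exact ⟨σ, Finset.mem_filter.mpr ⟨Finset.mem_univ _, hσ⟩, rfl⟩
    · intro σ hσ
      rw [hG]
      have hpr : ∀ mm ll : Fin d,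
          (∏ x ∈ Finset.univ.filter fun x => x < i1 σ x,
            M ((Fin.snoc (Fin.snoc nv mm) ll : Fin (n+1+1) → Fin d) x) ((Fin.snoc (Fin.snoc nv mm) ll : Fin (n+1+1) → Fin d) (i1 σ x)))
          = (∏ j ∈ Finset.univ.filter fun j => j < σ j, M (nv j) (nv (σ j))) * M mm ll := by
        intro mm ll
        rw [A_prod (F := fun x y =>
          M ((Fin.snoc (Fin.snoc nv mm) ll : Fin (n+1+1) → Fin d) x) ((Fin.snoc (Fin.snoc nv mm) ll : Fin (n+1+1) → Fin d) y))]
        rw [snoc_pe, snoc_la]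
        congr 1
        apply Finset.prod_congr rfl
        intro j _
        rw [snoc_eI, snoc_eI]
      simp only [hpr, hS]
      rw [Finset.mul_sum]
      apply Finset.sum_congr rfl
      intro mm _
      rw [Finset.mul_sum]
      apply Finset.sum_congr rfl
      intro ll _
      ring
  -- Case B
  have caseB : ∑ τ ∈ T2.filter (fun τ => ¬ τ la = pe), G τ
      = 2 * ∑ σ : Equiv.Perm (Fin n), (if (∀ i, σ (σ i) = i) ∧ (∀ i, σ i ≠ i) then
          ∑ i ∈ Finset.univ.filter (fun i => i < σ i),
            (∏ j ∈ (Finset.univ.filter fun j => j < σ j).erase i, M (nv j) (nv (σ j)))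
              * ((M * Q * M) (nv i) (nv (σ i)))
        else 0) := by
    have hB : ∑ τ ∈ T2.filter (fun τ => ¬ τ la = pe), G τ
        = ∑ p ∈ Tn ×ˢ (Finset.univ : Finset (Fin n)),
            (∏ j ∈ ((Finset.univ.filter fun j => j < p.1 j).erase p.2).erase (p.1 p.2),
              M (nv j) (nv (p.1 j)))
              * ((M * Q * M) (nv p.2) (nv (p.1 p.2))) := by
      refine (Finset.sum_bij (fun p _ => i2 p.1 p.2) ?_ ?_ ?_ ?_).symm
      · intro p hp
        rw [Finset.mem_product, hTn, Finset.mem_filter] at hp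
        rw [Finset.mem_filter, hT2, Finset.mem_filter]
        exact ⟨⟨Finset.mem_univ _, i2_pair hp.1.2 p.2⟩, i2_la_ne_pe hp.1.2 p.2⟩
      · intro p1 _ p2 _ h
        obtain ⟨h1, h2⟩ := i2_inj h
        exact Prod.ext h1 h2
      · intro τ hτ
        rw [Finset.mem_filter, hT2, Finset.mem_filter] at hτ
        obtain ⟨σ, hσ, i, rfl⟩ := i2_surj hτ.1.2 hτ.2
        exact ⟨(σ, i), Finset.mem_product.mpr
          ⟨Finset.mem_filter.mpr ⟨Finset.mem_univ _, hσ⟩, Finset.mem_univ _⟩, rfl⟩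
      · intro p hp
        rw [Finset.mem_product, hTn, Finset.mem_filter] at hp
        obtain ⟨⟨_, hpair⟩, _⟩ := hp
        rw [hG]
        have hpr : ∀ mm ll : Fin d,
            (∏ x ∈ Finset.univ.filter fun x => x < i2 p.1 p.2 x,
              M ((Fin.snoc (Fin.snoc nv mm) ll : Fin (n+1+1) → Fin d) x) ((Fin.snoc (Fin.snoc nv mm) ll : Fin (n+1+1) → Fin d) (i2 p.1 p.2 x)))
            = M (nv p.2) mm * (M (nv (p.1 p.2)) ll *
                ∏ j ∈ ((Finset.univ.filter fun j => j < p.1 j).erase p.2).erase (p.1 p.2),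
                  M (nv j) (nv (p.1 j))) := by
          intro mm ll
          rw [B_prod hpair p.2 (F := fun x y =>
            M ((Fin.snoc (Fin.snoc nv mm) ll : Fin (n+1+1) → Fin d) x) ((Fin.snoc (Fin.snoc nv mm) ll : Fin (n+1+1) → Fin d) y))]
          rw [snoc_eI, snoc_pe, snoc_eI, snoc_la]
          congr 2
          apply Finset.prod_congr rfl
          intro j _
          rw [snoc_eI, snoc_eI]
        simp only [hpr]
        rw [← contractMQM M Q hM (nv p.2) (nv (p.1 p.2)), Finset.mul_sum]
        apply Finset.sum_congr rfl
        intro mm _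
        rw [Finset.mul_sum]
        apply Finset.sum_congr rfl
        intro ll _
        ring
    rw [hB, Finset.sum_product]
    -- now reduce the inner full sum to twice the filtered sum
    have inner : ∀ σ ∈ Tn, (∑ i : Fin n,
        (∏ j ∈ ((Finset.univ.filter fun j => j < σ j).erase i).erase (σ i),
          M (nv j) (nv (σ j))) * ((M * Q * M) (nv i) (nv (σ i))))
        = 2 * ∑ i ∈ Finset.univ.filter (fun i => i < σ i),
            (∏ j ∈ (Finset.univ.filter fun j => j < σ j).erase i, M (nv j) (nv (σ j)))
              * ((M * Q * M) (nv i) (nv (σ i))) := by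
      intro σ hσ
      rw [hTn, Finset.mem_filter] at hσ
      obtain ⟨_, hpair⟩ := hσ
      set t : Fin n → ℝ := fun i =>
        (∏ j ∈ ((Finset.univ.filter fun j => j < σ j).erase i).erase (σ i),
          M (nv j) (nv (σ j))) * ((M * Q * M) (nv i) (nv (σ i))) with ht
      have hsplit := Finset.sum_filter_add_sum_filter_not
        (Finset.univ : Finset (Fin n)) (fun i => i < σ i) t
      have flip : ∑ i ∈ Finset.univ.filter (fun i => ¬ i < σ i), t i
          = ∑ i ∈ Finset.univ.filter (fun i => i < σ i), t i := by
        refine Finset.sum_nbij' (i := fun a => σ a) (j := fun b => σ b) ?_ ?_ ?_ ?_ ?_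
        · intro a ha
          rw [Finset.mem_filter] at ha ⊢
          refine ⟨Finset.mem_univ _, ?_⟩
          rw [hpair.1]
          rcases lt_trichotomy (σ a) a with h | h | h
          · exact h
          · exact absurd h (hpair.2 a)
          · exact absurd h ha.2
        · intro b hb
          rw [Finset.mem_filter] at hb ⊢
          refine ⟨Finset.mem_univ _, ?_⟩
          rw [hpair.1]
          exact fun hc => absurd (lt_trans hb.2 hc) (lt_irrefl _)
        · intro a _; exact hpair.1 a
        · intro b _; exact hpair.1 b
        · intro a _
          rw [ht]
          simp only
          rw [hpair.1, MQMsymm M Q hM hQ]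
          congr 2
          exact Finset.erase_right_comm
      rw [two_mul, ← hsplit, flip]
      have tval : ∀ i ∈ Finset.univ.filter (fun i => i < σ i), t i
          = (∏ j ∈ (Finset.univ.filter fun j => j < σ j).erase i, M (nv j) (nv (σ j)))
              * ((M * Q * M) (nv i) (nv (σ i))) := by
        intro i hi
        rw [Finset.mem_filter] at hi
        rw [ht]
        simp only
        congr 2
        apply Finset.erase_eq_of_notMem
        intro hc
        rw [Finset.mem_erase, Finset.mem_filter] at hc
        rw [hpair.1] at hc
        exact absurd (lt_trans hi.2 hc.2.2) (lt_irrefl _)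
      rw [Finset.sum_congr rfl tval]
    rw [Finset.sum_congr rfl inner, ← Finset.mul_sum]
    congr 1
    exact (Finset.sum_filter (fun σ : Equiv.Perm (Fin n) => (∀ i, σ (σ i) = i) ∧ (∀ i, σ i ≠ i))
      (fun σ => ∑ i ∈ Finset.univ.filter (fun i => i < σ i),
        (∏ j ∈ (Finset.univ.filter fun j => j < σ j).erase i, M (nv j) (nv (σ j)))
          * ((M * Q * M) (nv i) (nv (σ i)))))
  rw [caseA, caseB]

end Matrices

end SPaux


section Analytic

open SPaux Polynomial Matrix

attribute [local instance] Matrix.linftyOpNormedAddCommGroup Matrix.linftyOpNormedRing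
attribute [local instance] Matrix.linftyOpNormedAlgebra

lemma posdef_smul {d : ℕ} {M : Matrix (Fin d) (Fin d) ℝ} (hM : M.PosDef) {c : ℝ} (hc : 0 < c) :
    (c • M).PosDef := by
  refine ⟨?_, fun x hx => ?_⟩
  · have h := hM.1
    unfold Matrix.IsHermitian at *
    rw [Matrix.conjTranspose_smul, h]
    simp
  · have := hM.2 hx
    have h := smul_pos hc this
    simp only [Finsupp.sum, Finset.mul_sum, smul_eq_mul] at h
    simp only [Finsupp.sum, Matrix.smul_apply, smul_eq_mul]
    refine lt_of_lt_of_eq h ?_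
    apply Finset.sum_congr rfl; intro i _
    apply Finset.sum_congr rfl; intro j _
    ring

noncomputable def entryCLM (d : ℕ) (a b : Fin d) : Matrix (Fin d) (Fin d) ℝ →L[ℝ] ℝ :=
  LinearMap.toContinuousLinearMap
    { toFun := fun M => M a b
      map_add' := fun _ _ => rfl
      map_smul' := fun _ _ => rfl }

theorem stmt3 (d k : ℕ) (P0 P1 : Matrix (Fin d) (Fin d) ℝ)
    (h0s : P0.IsSymm) (h0p : P0.PosDef) (h1s : P1.IsSymm) (h1p : P1.PosDef)
    (nv : Fin (2 * k) → Fin d) (s : ℝ) (hs : s ∈ Set.Ioo (0 : ℝ) 1) :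
    deriv (fun u : ℝ =>
        sumPairings nv (u • P0 + (1 - u) • P1)⁻¹ /
          Real.sqrt (u • P0 + (1 - u) • P1).det) s =
      -(1 / 2) * ∑ m : Fin d, ∑ l : Fin d,
        sumPairings (Fin.snoc (Fin.snoc nv m) l) (s • P0 + (1 - s) • P1)⁻¹ *
          (P0 - P1) m l / Real.sqrt (s • P0 + (1 - s) • P1).det := by
  classical
  obtain ⟨hs0, hs1⟩ := hs
  set Qm : Matrix (Fin d) (Fin d) ℝ := P0 - P1 with hQdef
  set P : ℝ → Matrix (Fin d) (Fin d) ℝ := fun u => u • P0 + (1 - u) • P1 with hPdef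
  have hPs_pos : (P s).PosDef :=
    (posdef_smul h0p hs0).add (posdef_smul h1p (by linarith))
  set A : Matrix (Fin d) (Fin d) ℝ := (P s)⁻¹ with hAdef
  have hdet_pos : 0 < (P s).det := hPs_pos.det_pos
  have hdet_unit : IsUnit (P s).det := isUnit_iff_ne_zero.mpr hdet_pos.ne'
  have hunit : IsUnit (P s) := (Matrix.isUnit_iff_isUnit_det _).mpr hdet_unit
  obtain ⟨w, hw⟩ := hunit
  -- symmetry facts
  have hQsym : ∀ a b, Qm a b = Qm b a := by
    intro a b
    have h0 := congrFun (congrFun h0s b) a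
    have h1 := congrFun (congrFun h1s b) a
    rw [Matrix.transpose_apply] at h0 h1
    simp only [hQdef, Matrix.sub_apply]
    rw [h0, h1]
  have hPssym : (P s)ᵀ = P s := by
    simp only [hPdef, Matrix.transpose_add, Matrix.transpose_smul]
    rw [h0s, h1s]
  have hAsym : ∀ a b, A a b = A b a := by
    intro a b
    have h : Aᵀ = A := by
      rw [hAdef, Matrix.transpose_nonsing_inv, hPssym]
    have := congrFun (congrFun h b) a
    rw [Matrix.transpose_apply] at this
    exact this
  -- derivative of P
  have hP' : HasDerivAt P Qm s := by
    have h1 : HasDerivAt (fun u : ℝ => u • P0) ((1:ℝ) • P0) s :=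
      (hasDerivAt_id s).smul_const P0
    have h2 : HasDerivAt (fun u : ℝ => (1 - u) • P1) ((-1:ℝ) • P1) s := by
      have := ((hasDerivAt_id s).const_sub 1).smul_const P1
      simp at this ⊢; exact this
    have := h1.add h2
    simp only [one_smul, neg_one_smul] at this
    rw [hPdef, hQdef]
    rw [sub_eq_add_neg P0 P1]
    exact this
  -- derivative of the inverse
  have hInv : HasDerivAt (fun u => (P u)⁻¹) (-(A * Qm * A)) s := by
    have hw' : HasFDerivAt Ring.inverse
        (-(ContinuousLinearMap.mulLeftRight ℝ (Matrix (Fin d) (Fin d) ℝ) ↑w⁻¹ ↑w⁻¹)) (P s) := by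
      rw [← hw]; exact hasFDerivAt_ringInverse w
    have h := hw'.comp_hasDerivAt s hP'
    have hfun : (fun u => (P u)⁻¹) = fun u => Ring.inverse (P u) :=
      funext fun u => Matrix.nonsing_inv_eq_ringInverse _
    rw [hfun]
    refine h.congr_deriv ?_
    simp only [ContinuousLinearMap.neg_apply, ContinuousLinearMap.mulLeftRight_apply,
      Matrix.coe_units_inv, hw, ← hAdef]
  have hEntry : ∀ a b : Fin d, HasDerivAt (fun u => (P u)⁻¹ a b) (-((A * Qm * A) a b)) s := by
    intro a b
    have := (entryCLM d a b).hasFDerivAt.comp_hasDerivAt s hInv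
    exact this
  -- derivative of the determinant
  set tr : ℝ := (A * Qm).trace with htrdef
  set pol : Polynomial ℝ :=
    ((1 + (Polynomial.X : Polynomial ℝ) • (A * Qm).map Polynomial.C).det).divX.divX with hpol
  have hPu : ∀ u, P u = P s + (u - s) • Qm := by
    intro u
    simp only [hPdef, hQdef]
    simp only [smul_sub, sub_smul, one_smul]
    try abel
  have hfun : ∀ u, (P u).det
      = (P s).det * (1 + tr * (u - s) + pol.eval (u - s) * (u - s)^2) := by
    intro u
    have hmul : P u = P s * (1 + (u - s) • (A * Qm)) := by
      rw [Matrix.mul_add, Matrix.mul_one, Matrix.mul_smul, ← Matrix.mul_assoc,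
        Matrix.mul_nonsing_inv _ hdet_unit, Matrix.one_mul, ← hPu]
    rw [hmul, Matrix.det_mul, Matrix.det_one_add_smul]
  have hDet : HasDerivAt (fun u => (P u).det) ((P s).det * tr) s := by
    have h1 : HasDerivAt (fun u : ℝ => 1 + tr * (u - s)) tr s := by
      have := (((hasDerivAt_id s).sub_const s).const_mul tr).const_add 1
      simpa using this
    have h2 : HasDerivAt (fun u : ℝ => pol.eval (u - s)) (pol.derivative.eval (s - s)) s := by
      have h4 : HasDerivAt (fun u : ℝ => u - s) 1 s := by
        simpa using (hasDerivAt_id s).sub_const s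
      have h5 := pol.hasDerivAt (s - s)
      have := HasDerivAt.comp (h₂ := fun x : ℝ => Polynomial.eval x pol)
        (h := fun u : ℝ => u - s) s h5 h4
      simp at this ⊢; exact this
    have h6 : HasDerivAt (fun u : ℝ => (u - s)^2) 0 s := by
      have := ((hasDerivAt_id s).sub_const s).pow 2
      simp at this; exact this
    have h7 : HasDerivAt (fun u : ℝ => pol.eval (u - s) * (u - s)^2) 0 s := by
      have := h2.mul h6
      simp at this; exact this
    have h8 := (h1.add h7).const_mul ((P s).det)
    have h9 : (fun u => (P u).det)
        = fun u => (P s).det * (1 + tr * (u - s) + pol.eval (u - s) * (u - s)^2) :=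
      funext hfun
    rw [h9]
    simpa using h8
  have hsqne : Real.sqrt ((P s).det) ≠ 0 :=
    ne_of_gt (Real.sqrt_pos.mpr hdet_pos)
  have hSqrt : HasDerivAt (fun u => Real.sqrt ((P u).det))
      (1 / (2 * Real.sqrt ((P s).det)) * ((P s).det * tr)) s :=
    (Real.hasDerivAt_sqrt hdet_pos.ne').comp s hDet
  -- derivative of the numerator
  set Dval : ℝ := ∑ σ : Equiv.Perm (Fin (2*k)),
      (if (∀ i, σ (σ i) = i) ∧ (∀ i, σ i ≠ i) then
        ∑ i ∈ Finset.univ.filter (fun i => i < σ i),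
          (∏ j ∈ (Finset.univ.filter fun j => j < σ j).erase i, A (nv j) (nv (σ j)))
            * ((A * Qm * A) (nv i) (nv (σ i)))
      else 0) with hDval
  have hNum : HasDerivAt (fun u => sumPairings nv ((P u)⁻¹)) (-Dval) s := by
    have hraw : HasDerivAt (fun u => ∑ σ : Equiv.Perm (Fin (2*k)),
        (if (∀ i, σ (σ i) = i) ∧ (∀ i, σ i ≠ i) then
          ∏ i ∈ Finset.univ.filter fun i => i < σ i, (P u)⁻¹ (nv i) (nv (σ i))
        else 0))
        (∑ σ : Equiv.Perm (Fin (2*k)),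
          (if (∀ i, σ (σ i) = i) ∧ (∀ i, σ i ≠ i) then
            ∑ i ∈ Finset.univ.filter (fun i => i < σ i),
              (∏ j ∈ (Finset.univ.filter fun j => j < σ j).erase i, A (nv j) (nv (σ j)))
                • (-((A * Qm * A) (nv i) (nv (σ i))))
          else 0)) s := by
      apply HasDerivAt.fun_sum
      intro σ _
      by_cases hc : (∀ i, σ (σ i) = i) ∧ (∀ i, σ i ≠ i)
      · simp only [if_pos hc]
        exact HasDerivAt.fun_finsetProd (fun i _ => hEntry (nv i) (nv (σ i)))
      · simp only [if_neg hc]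
        exact hasDerivAt_const _ _
    have hval : (∑ σ : Equiv.Perm (Fin (2*k)),
        (if (∀ i, σ (σ i) = i) ∧ (∀ i, σ i ≠ i) then
          ∑ i ∈ Finset.univ.filter (fun i => i < σ i),
            (∏ j ∈ (Finset.univ.filter fun j => j < σ j).erase i, A (nv j) (nv (σ j)))
              • (-((A * Qm * A) (nv i) (nv (σ i))))
        else 0)) = -Dval := by
      rw [hDval, ← Finset.sum_neg_distrib]
      apply Finset.sum_congr rfl
      intro σ _
      by_cases hc : (∀ i, σ (σ i) = i) ∧ (∀ i, σ i ≠ i)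
      · simp only [if_pos hc, smul_eq_mul, mul_neg, Finset.sum_neg_distrib]
      · simp only [if_neg hc, neg_zero]
    rw [hval] at hraw
    exact hraw
  have hF := hNum.fun_div hSqrt hsqne
  have htr : tr = ∑ mm : Fin d, ∑ ll : Fin d, A mm ll * Qm mm ll := by
    rw [htrdef, Matrix.trace]
    apply Finset.sum_congr rfl
    intro mm _
    rw [Matrix.diag_apply, Matrix.mul_apply]
    apply Finset.sum_congr rfl
    intro ll _
    rw [hQsym ll mm]
  show deriv (fun u : ℝ => sumPairings nv ((P u)⁻¹) / Real.sqrt ((P u).det)) s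
      = -(1 / 2) * ∑ mm : Fin d, ∑ ll : Fin d,
          sumPairings (Fin.snoc (Fin.snoc nv mm) ll) A * Qm mm ll / Real.sqrt ((P s).det)
  rw [hF.deriv]
  rw [← hAdef]
  have hcomb := SPaux.comb (n := 2*k) A Qm nv hAsym hQsym
  simp only [← Finset.sum_div]
  rw [hcomb, ← htr, ← hDval]
  generalize hq : Real.sqrt ((P s).det) = sq
  have hsqne' : sq ≠ 0 := hq ▸ hsqne
  have hde : (P s).det = sq * sq := by
    rw [← hq]; exact (Real.mul_self_sqrt hdet_pos.le).symm
  rw [hde]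
  field_simp
  ring

end Analytic
end

section
/- Let t_0, t_1 be distinct positive reals and let α ≥ 1 be an integer. Then ∫_0^1 s^{α−1} (s t_0 + (1−s) t_1)^{−α} ds = ((−1)^{α−1}/(α−1)!) · ∂_{t_0}^{α−1} [ (ln t_0 − ln t_1)/(t_0 − t_1) ], where the derivative on the right is the (α−1)-st partial derivative in the variable t_0 of the first divided difference of the natural logarithm. -/
open MeasureTheory Set

-- positivity of the convex combination
lemma gmin {x t1 s : ℝ} (hs0 : 0 ≤ s) (hs1 : s ≤ 1) :
    min x t1 ≤ s * x + (1 - s) * t1 := by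
  nlinarith [min_le_left x t1, min_le_right x t1]

lemma contOn (t1 x c : ℝ) (h1 : 0 < t1) (hx : 0 < x) (k : ℕ) (m : ℤ) :
    ContinuousOn (fun s : ℝ => c * s ^ k * (s * x + (1 - s) * t1) ^ m) (Icc 0 1) := by
  apply ContinuousOn.mul
  · exact (continuous_const.mul (continuous_pow k)).continuousOn
  · apply ContinuousOn.zpow₀
    · fun_prop
    · intro s hs
      left
      have := gmin (x := x) (t1 := t1) hs.1 hs.2
      have : 0 < s * x + (1 - s) * t1 := lt_of_lt_of_le (lt_min hx h1) this
      exact ne_of_gt this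


lemma contOn' (t1 x : ℝ) (h1 : 0 < t1) (hx : 0 < x) (f : ℝ → ℝ) (hf : Continuous f) (m : ℤ) :
    ContinuousOn (fun s : ℝ => f s * (s * x + (1 - s) * t1) ^ m) (Icc 0 1) := by
  apply ContinuousOn.mul hf.continuousOn
  apply ContinuousOn.zpow₀
  · fun_prop
  · intro s hs
    left
    exact ne_of_gt (lt_of_lt_of_le (lt_min hx h1) (gmin hs.1 hs.2))

lemma keyJ (t1 : ℝ) (h1 : 0 < t1) (n : ℕ) (t : ℝ) (ht : 0 < t) :
    HasDerivAt
      (fun x => ∫ s in (0:ℝ)..1, s ^ n * (s * x + (1 - s) * t1) ^ (-(n + 1) : ℤ))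
      (∫ s in (0:ℝ)..1, -((n : ℝ) + 1) * s ^ (n + 1) * (s * t + (1 - s) * t1) ^ (-(n + 2) : ℤ)) t := by
  set δ : ℝ := min (t / 2) t1 with hδ
  have hδpos : 0 < δ := lt_min (by linarith) h1
  have hball : ∀ x ∈ Metric.ball t (t / 2), ∀ s ∈ Set.Ioc (0:ℝ) 1,
      δ ≤ s * x + (1 - s) * t1 := by
    intro x hx s hs
    have hx2 : t / 2 ≤ x := by
      have := abs_lt.1 (mem_ball_iff_norm.1 hx); linarith [this.1]
    calc δ ≤ min x t1 := min_le_min hx2 le_rfl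
      _ ≤ s * x + (1 - s) * t1 := gmin hs.1.le hs.2
  have hIoc : Set.uIoc (0:ℝ) 1 = Set.Ioc (0:ℝ) 1 := Set.uIoc_of_le zero_le_one
  have key := intervalIntegral.hasDerivAt_integral_of_dominated_loc_of_deriv_le
    (F := fun x s => s ^ n * (s * x + (1 - s) * t1) ^ (-(n + 1) : ℤ))
    (F' := fun x s => -((n : ℝ) + 1) * s ^ (n + 1) * (s * x + (1 - s) * t1) ^ (-(n + 2) : ℤ))
    (x₀ := t) (a := (0:ℝ)) (b := 1) (μ := volume)
    (bound := fun _ => ((n : ℝ) + 1) * δ ^ (-(n + 2) : ℤ))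
    (Metric.ball_mem_nhds t (half_pos ht))
    ?_ ?_ ?_ ?_ ?_ ?_
  · exact key.2
  · -- hF_meas
    filter_upwards [eventually_gt_nhds ht] with x hx
    rw [hIoc]
    exact ((contOn' t1 x h1 hx _ (continuous_pow n) _).mono Set.Ioc_subset_Icc_self
      ).aestronglyMeasurable measurableSet_Ioc
  · -- hF_int
    apply ContinuousOn.intervalIntegrable
    rw [Set.uIcc_of_le zero_le_one]
    exact contOn' t1 t h1 ht _ (continuous_pow n) _
  · -- hF'_meas
    rw [hIoc]
    exact ((contOn' t1 t h1 ht _ (by fun_prop) _).mono Set.Ioc_subset_Icc_self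
      ).aestronglyMeasurable measurableSet_Ioc
  · -- h_bound
    apply MeasureTheory.ae_of_all
    intro s hs x hx
    rw [hIoc] at hs
    have hg : δ ≤ s * x + (1 - s) * t1 := hball x hx s hs
    have hgpos : (0:ℝ) < s * x + (1 - s) * t1 := lt_of_lt_of_le hδpos hg
    have h1' : |s ^ (n+1)| ≤ 1 := by
      rw [abs_of_nonneg (pow_nonneg hs.1.le _)]
      exact pow_le_one₀ hs.1.le hs.2
    have h2' : (s * x + (1 - s) * t1) ^ (-(n + 2) : ℤ) ≤ δ ^ (-(n + 2) : ℤ) := by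
      rw [show (-(n + 2) : ℤ) = -((n+2 : ℕ) : ℤ) by push_cast; ring]
      rw [zpow_neg, zpow_neg, zpow_natCast, zpow_natCast]
      exact inv_anti₀ (pow_pos hδpos _) (pow_le_pow_left₀ hδpos.le hg _)
    have h3' : (0:ℝ) ≤ (s * x + (1 - s) * t1) ^ (-(n + 2) : ℤ) := zpow_nonneg hgpos.le _
    calc ‖-((n : ℝ) + 1) * s ^ (n + 1) * (s * x + (1 - s) * t1) ^ (-(n + 2) : ℤ)‖
        = ((n : ℝ) + 1) * |s ^ (n+1)| * (s * x + (1 - s) * t1) ^ (-(n + 2) : ℤ) := by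
          rw [Real.norm_eq_abs, abs_mul, abs_mul, abs_neg,
            abs_of_nonneg (by positivity : (0:ℝ) ≤ (n : ℝ) + 1), abs_of_nonneg h3']
      _ ≤ ((n : ℝ) + 1) * 1 * δ ^ (-(n + 2) : ℤ) := by
          apply mul_le_mul (by nlinarith) h2' h3' (by positivity)
      _ = ((n : ℝ) + 1) * δ ^ (-(n + 2) : ℤ) := by ring
  · -- bound integrable
    exact intervalIntegrable_const
  · -- h_diff
    apply MeasureTheory.ae_of_all
    intro s hs x hx
    rw [hIoc] at hs
    have hgpos : (0:ℝ) < s * x + (1 - s) * t1 :=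
      lt_of_lt_of_le hδpos (hball x hx s hs)
    have hlin : HasDerivAt (fun y : ℝ => s * y + (1 - s) * t1) s x := by
      simpa using ((hasDerivAt_id x).const_mul s).add_const ((1 - s) * t1)
    have hz := (hasDerivAt_zpow (-(n + 1) : ℤ) (s * x + (1 - s) * t1)
      (Or.inl (ne_of_gt hgpos))).comp x hlin
    have := hz.const_mul (s ^ n)
    refine this.congr_deriv ?_
    rw [show (-(n + 1) : ℤ) - 1 = -(n + 2) by ring]
    push_cast
    ring

lemma base (t1 : ℝ) (h1 : 0 < t1) (t : ℝ) (ht : 0 < t) (hne : t ≠ t1) :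
    ∫ s in (0:ℝ)..1, (s * t + (1 - s) * t1) ^ (-(0 + 1) : ℤ)
      = (Real.log t - Real.log t1) / (t - t1) := by
  have hsub : (t - t1) ≠ 0 := sub_ne_zero.2 hne
  have hcalc := intervalIntegral.integral_eq_sub_of_hasDerivAt
    (f := fun s : ℝ => Real.log ((t - t1) * s + t1) / (t - t1))
    (f' := fun s : ℝ => (s * t + (1 - s) * t1) ^ (-(0 + 1) : ℤ))
    (a := (0:ℝ)) (b := 1) ?_ ?_
  · rw [hcalc]
    rw [show (t - t1) * 1 + t1 = t by ring, show (t - t1) * 0 + t1 = t1 by ring]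
    ring
  · intro s hs
    rw [Set.uIcc_of_le zero_le_one] at hs
    have hgpos : (0:ℝ) < s * t + (1 - s) * t1 :=
      lt_of_lt_of_le (lt_min ht h1) (gmin hs.1 hs.2)
    have hgpos' : ((t - t1) * s + t1) ≠ 0 := by
      rw [show (t - t1) * s + t1 = s * t + (1 - s) * t1 by ring]
      exact ne_of_gt hgpos
    have hlin : HasDerivAt (fun y : ℝ => (t - t1) * y + t1) (t - t1) s := by
      simpa using ((hasDerivAt_id s).const_mul (t - t1)).add_const t1
    have hlog := (Real.hasDerivAt_log hgpos').comp s hlin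
    have := hlog.div_const (t - t1)
    refine this.congr_deriv ?_
    simp only [show (-(0 + 1) : ℤ) = -1 from by norm_num, zpow_neg_one]
    rw [show (t - t1) * s + t1 = s * t + (1 - s) * t1 by ring]
    field_simp
  · apply ContinuousOn.intervalIntegrable
    rw [Set.uIcc_of_le zero_le_one]
    have := contOn' t1 t h1 ht (fun _ => (1:ℝ)) continuous_const (-(0 + 1) : ℤ)
    simpa using this

lemma auxMain (t1 : ℝ) (h1 : 0 < t1) (n : ℕ) :
    ∀ t : ℝ, 0 < t → t ≠ t1 →
      iteratedDeriv n (fun u => (Real.log u - Real.log t1) / (u - t1)) t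
        = (-1 : ℝ) ^ n * (Nat.factorial n : ℝ) *
            ∫ s in (0:ℝ)..1, s ^ n * (s * t + (1 - s) * t1) ^ (-(n + 1) : ℤ) := by
  induction n with
  | zero =>
    intro t ht hne
    simp only [iteratedDeriv_zero, pow_zero, Nat.factorial_zero, Nat.cast_one, one_mul,
      Nat.cast_zero]
    rw [base t1 h1 t ht hne]
  | succ n ih =>
    intro t ht hne
    have hopen : IsOpen {u : ℝ | 0 < u ∧ u ≠ t1} :=
      (isOpen_lt continuous_const continuous_id).inter isOpen_ne
    have hU : ∀ᶠ u in nhds t, 0 < u ∧ u ≠ t1 :=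
      Filter.eventually_of_mem (hopen.mem_nhds ⟨ht, hne⟩) (fun u hu => hu)
    have heq : (iteratedDeriv n (fun u => (Real.log u - Real.log t1) / (u - t1)))
        =ᶠ[nhds t] fun u => (-1 : ℝ) ^ n * (Nat.factorial n : ℝ) *
          ∫ s in (0:ℝ)..1, s ^ n * (s * u + (1 - s) * t1) ^ (-(n + 1) : ℤ) := by
      filter_upwards [hU] with u hu
      exact ih u hu.1 hu.2
    rw [iteratedDeriv_succ, heq.deriv_eq]
    have hd := (keyJ t1 h1 n t ht).const_mul ((-1 : ℝ) ^ n * (Nat.factorial n : ℝ))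
    rw [hd.deriv]
    rw [show (-(↑(n + 1) + 1) : ℤ) = -(↑n + 2) by push_cast; ring]
    simp_rw [mul_assoc]
    rw [intervalIntegral.integral_const_mul]
    push_cast [Nat.factorial_succ]
    ring

theorem stmt5 (t0 t1 : ℝ) (h0 : 0 < t0) (h1 : 0 < t1) (hne : t0 ≠ t1)
    (α : ℕ) (hα : 1 ≤ α) :
    ∫ s in (0:ℝ)..1, s ^ (α - 1) * (s * t0 + (1 - s) * t1) ^ (-(α : ℤ)) =
      ((-1 : ℝ) ^ (α - 1) / (Nat.factorial (α - 1) : ℝ)) *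
        iteratedDeriv (α - 1)
          (fun u => (Real.log u - Real.log t1) / (u - t1)) t0 := by
  obtain ⟨n, rfl⟩ : ∃ n, α = n + 1 := ⟨α - 1, by omega⟩
  simp only [Nat.add_sub_cancel]
  rw [auxMain t1 h1 n t0 h0 hne]
  rw [show (-(↑(n + 1)) : ℤ) = -(↑n + 1) by push_cast; ring]
  have hf : (Nat.factorial n : ℝ) ≠ 0 := Nat.cast_ne_zero.2 (Nat.factorial_ne_zero n)
  have h2 : ((-1 : ℝ)) ^ n * (-1 : ℝ) ^ n = 1 := by
    rw [← pow_add]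
    exact Even.neg_one_pow ⟨n, rfl⟩
  set X := ∫ s in (0:ℝ)..1, s ^ n * (s * t0 + (1 - s) * t1) ^ (-(↑n + 1) : ℤ)
  calc X = (((-1 : ℝ)) ^ n * (-1 : ℝ) ^ n) * ((Nat.factorial n : ℝ)⁻¹ * Nat.factorial n) * X := by
        rw [h2, inv_mul_cancel₀ hf]; ring
    _ = (-1 : ℝ) ^ n / (Nat.factorial n : ℝ) *
        ((-1 : ℝ) ^ n * (Nat.factorial n : ℝ) * X) := by ring
end

section
/- Let t_0,…,t_n be pairwise distinct positive reals, let α = (α_0,…,α_n) be positive integers with |α| = α_0 + ⋯ + α_n, set β_j = α_j − 1, and let p > 0 be a real number. Then: (i) if p ∉ {1, 2, …, |α|−1}, then ∫_{Σ_n} ∏_{j=0}^n s_j^{α_j−1} (Σ_{j=0}^n s_j t_j)^{−p} ds = (∏_{j=1}^{|α|−1}(j − p))^{−1} · ∂_{t_0}^{β_0} ⋯ ∂_{t_n}^{β_n} [t_0,…,t_n; u ↦ u^{|α|−1−p}]; and (ii) if |α| ≥ 2 and p = |α| − 1, then ∫_{Σ_n} ∏_{j=0}^n s_j^{α_j−1}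 (Σ_{j=0}^n s_j t_j)^{−p} ds = ((−1)^{|α|}/Γ(p)) · ∂_{t_0}^{β_0} ⋯ ∂_{t_n}^{β_n} [t_0,…,t_n; u ↦ ln u]. In both cases the partial derivatives are applied to the divided difference regarded as a smooth function of the pairwise distinct positive nodes. -/
open MeasureTheory

/-- Integral over the standard `n`-simplex, with the convention `s 0 = 1 − s 1 − ⋯ − s n`. -/
noncomputable def simplexIntegral (n : ℕ) (G : (Fin (n + 1) → ℝ) → ℝ) : ℝ :=
  ∫ s in {s : Fin n → ℝ | (∀ i, 0 ≤ s i) ∧ ∑ i, s i ≤ 1},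
    G (Fin.cons (1 - ∑ i, s i) s)

/-- Newton divided difference at pairwise distinct nodes. -/
noncomputable def divDiff {n : ℕ} (f : ℝ → ℝ) (x : Fin (n + 1) → ℝ) : ℝ :=
  ∑ j, f (x j) / ∏ l ∈ Finset.univ.erase j, (x j - x l)

/-- Partial derivative in the `j`-th coordinate of a function of several real variables. -/
noncomputable def pdCoord {n : ℕ} (j : Fin n) (F : (Fin n → ℝ) → ℝ) :
    (Fin n → ℝ) → ℝ :=
  fun x => deriv (fun t => F (Function.update x j t)) (x j)

/-- Iterated partial derivative `∂_{x_0}^{β 0} ⋯ ∂_{x_{n−1}}^{β (n−1)}`. -/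
noncomputable def pdMulti {n : ℕ} (β : Fin n → ℕ) (F : (Fin n → ℝ) → ℝ) :
    (Fin n → ℝ) → ℝ :=
  (List.finRange n).foldr (fun j G => (pdCoord j)^[β j] G) F


namespace HGaux

open Set

def Spx (n : ℕ) : Set (Fin n → ℝ) := {s | (∀ i, 0 ≤ s i) ∧ ∑ i, s i ≤ 1}

noncomputable def wt {n : ℕ} (s : Fin n → ℝ) : Fin (n+1) → ℝ := Fin.cons (1 - ∑ i, s i) s

lemma sum_wt {n : ℕ} (s : Fin n → ℝ) : ∑ k, wt s k = 1 := by
  simp [wt, Fin.sum_cons]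

lemma wt_nonneg {n : ℕ} {s : Fin n → ℝ} (hs : s ∈ Spx n) : ∀ k, 0 ≤ wt s k := by
  intro k
  refine Fin.cases ?_ ?_ k
  · simpa [wt] using hs.2
  · intro i; simpa [wt] using hs.1 i

lemma wt_le_one {n : ℕ} {s : Fin n → ℝ} (hs : s ∈ Spx n) : ∀ k, wt s k ≤ 1 := by
  intro k
  have h := wt_nonneg hs
  have := sum_wt s
  calc wt s k ≤ ∑ k, wt s k := Finset.single_le_sum (fun i _ => h i) (Finset.mem_univ k)
  _ = 1 := this

noncomputable def dot {n : ℕ} (t : Fin (n+1) → ℝ) (s : Fin n → ℝ) : ℝ := ∑ k, wt s k * t k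

lemma dot_eq {n : ℕ} (t : Fin (n+1) → ℝ) (s : Fin n → ℝ) :
    dot t s = (1 - ∑ i, s i) * t 0 + ∑ i, s i * t i.succ := by
  simp [dot, wt, Fin.sum_univ_succ]

lemma le_dot {n : ℕ} {t : Fin (n+1) → ℝ} {s : Fin n → ℝ} (hs : s ∈ Spx n) {m : ℝ}
    (hm : ∀ k, m ≤ t k) : m ≤ dot t s := by
  calc m = (∑ k, wt s k) * m := by rw [sum_wt]; ring
  _ = ∑ k, wt s k * m := by rw [Finset.sum_mul]
  _ ≤ ∑ k, wt s k * t k :=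
      Finset.sum_le_sum fun k _ => mul_le_mul_of_nonneg_left (hm k) (wt_nonneg hs k)
  _ = dot t s := rfl

lemma dot_le {n : ℕ} {t : Fin (n+1) → ℝ} {s : Fin n → ℝ} (hs : s ∈ Spx n) {M : ℝ}
    (hM : ∀ k, t k ≤ M) : dot t s ≤ M := by
  calc dot t s ≤ ∑ k, wt s k * M :=
      Finset.sum_le_sum fun k _ => mul_le_mul_of_nonneg_left (hM k) (wt_nonneg hs k)
  _ = (∑ k, wt s k) * M := by rw [Finset.sum_mul]
  _ = M := by rw [sum_wt]; ring

lemma dot_pos {n : ℕ} {t : Fin (n+1) → ℝ} (ht : ∀ k, 0 < t k) {s : Fin n → ℝ}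
    (hs : s ∈ Spx n) : 0 < dot t s := by
  have hne : (Finset.univ : Finset (Fin (n+1))).Nonempty := ⟨0, Finset.mem_univ 0⟩
  obtain ⟨k₀, -, hk₀⟩ := Finset.exists_mem_eq_inf' hne t
  have h2 : Finset.univ.inf' hne t ≤ dot t s :=
    le_dot hs (fun k => Finset.inf'_le t (Finset.mem_univ k))
  rw [hk₀] at h2
  exact lt_of_lt_of_le (ht k₀) h2

lemma isClosed_Spx (n : ℕ) : IsClosed (Spx n) := by
  have h1 : IsClosed {s : Fin n → ℝ | ∀ i, 0 ≤ s i} := by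
    have : {s : Fin n → ℝ | ∀ i, 0 ≤ s i} = ⋂ i, {s | 0 ≤ s i} := by ext; simp
    rw [this]
    exact isClosed_iInter fun i => isClosed_le continuous_const (continuous_apply i)
  have h2 : IsClosed {s : Fin n → ℝ | ∑ i, s i ≤ 1} :=
    isClosed_le (by continuity) continuous_const
  exact h1.inter h2

lemma isCompact_Spx (n : ℕ) : IsCompact (Spx n) := by
  refine Metric.isCompact_of_isClosed_isBounded (isClosed_Spx n) ?_
  have : Spx n ⊆ Set.pi Set.univ (fun _ : Fin n => Icc (0:ℝ) 1) := by
    intro s hs i _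
    refine ⟨hs.1 i, ?_⟩
    calc s i ≤ ∑ k, s k := Finset.single_le_sum (fun k _ => hs.1 k) (Finset.mem_univ i)
    _ ≤ 1 := hs.2
  exact (Bornology.IsBounded.pi (fun _ => Metric.isBounded_Icc 0 1)).subset this

lemma measurableSet_Spx (n : ℕ) : MeasurableSet (Spx n) := (isClosed_Spx n).measurableSet

lemma continuous_dot {n : ℕ} (t : Fin (n+1) → ℝ) : Continuous (fun s => dot t s) := by
  simp only [dot_eq]
  fun_prop

lemma contOn_integrand {n : ℕ} (γ : Fin (n+1) → ℕ) {h : ℝ → ℝ}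
    (hc : ContinuousOn h (Ioi 0)) {t : Fin (n+1) → ℝ} (ht : ∀ k, 0 < t k) :
    ContinuousOn (fun s : Fin n → ℝ => (∏ k, wt s k ^ γ k) * h (dot t s)) (Spx n) := by
  have hw : Continuous (fun s : Fin n → ℝ => ∏ k, wt s k ^ γ k) := by
    refine continuous_finset_prod _ fun k _ => ?_
    refine Continuous.pow ?_ _
    refine Fin.cases ?_ ?_ k
    · simpa [wt] using (by fun_prop : Continuous fun s : Fin n → ℝ => 1 - ∑ i, s i)
    · intro i; simpa [wt] using continuous_apply i
  refine hw.continuousOn.mul (hc.comp (continuous_dot t).continuousOn ?_)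
  intro s hs
  exact dot_pos ht hs

lemma integrableOn_integrand {n : ℕ} (γ : Fin (n+1) → ℕ) {h : ℝ → ℝ}
    (hc : ContinuousOn h (Ioi 0)) {t : Fin (n+1) → ℝ} (ht : ∀ k, 0 < t k) :
    IntegrableOn (fun s : Fin n → ℝ => (∏ k, wt s k ^ γ k) * h (dot t s)) (Spx n) :=
  (contOn_integrand γ hc ht).integrableOn_compact (isCompact_Spx n)

lemma fieldAux0 (A a P : ℝ) (ha : a ≠ 0) (hP : P ≠ 0) : A / (a * P) * -a = -(A / P) := by
  field_simp

lemma fieldAux1 (A a P : ℝ) (ha : a ≠ 0) (hP : P ≠ 0) : A / (a * P) * a = A / P := by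
  field_simp

lemma fieldAux2 (A a b R : ℝ) (ha : a ≠ 0) (hb : b ≠ 0) (hR : R ≠ 0) :
    A / (a * (b * R)) * (a - b) = A / (b * R) - A / (a * R) := by
  field_simp

lemma image_succAbove_univ {n : ℕ} (k : Fin (n+2)) :
    Finset.univ.image (Fin.succAbove k) = Finset.univ.erase k := by
  ext m
  simp only [Finset.mem_image, Finset.mem_erase, Finset.mem_univ, and_true, true_and]
  constructor
  · rintro ⟨i, hi⟩
    rw [← hi]
    exact Fin.succAbove_ne k i
  · intro hm
    exact Fin.exists_succAbove_eq hm

lemma prod_comp_succAbove {n : ℕ} (g : Fin (n+2) → ℝ) (k : Fin (n+2)) (i : Fin (n+1)) :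
    ∏ l ∈ Finset.univ.erase i, g (Fin.succAbove k l) =
      ∏ m ∈ (Finset.univ.erase (Fin.succAbove k i)).erase k, g m := by
  rw [← Finset.prod_image (fun x _ y _ h => Fin.succAbove_right_injective (p := k) h)]
  congr 1
  rw [Finset.image_erase (Fin.succAbove_right_injective (p := k)), image_succAbove_univ,
    Finset.erase_right_comm]

lemma divDiff_comp_succAbove {n : ℕ} (f : ℝ → ℝ) (t : Fin (n+2) → ℝ) (k : Fin (n+2)) :
    divDiff f (t ∘ Fin.succAbove k) =
      ∑ j ∈ Finset.univ.erase k,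
        f (t j) / ∏ l ∈ (Finset.univ.erase j).erase k, (t j - t l) := by
  rw [divDiff]
  rw [← image_succAbove_univ k,
    Finset.sum_image (fun x _ y _ h => Fin.succAbove_right_injective (p := k) h)]
  refine Finset.sum_congr rfl fun i _ => ?_
  simp only [Function.comp_apply]
  rw [prod_comp_succAbove (fun m => t (Fin.succAbove k i) - t m) k i]

lemma divDiff_rec {n : ℕ} (f : ℝ → ℝ) (t : Fin (n+2) → ℝ) (hinj : Function.Injective t) :
    divDiff f t =
      (divDiff f (t ∘ Fin.succAbove 0) - divDiff f (t ∘ Fin.succAbove 1)) / (t 1 - t 0) := by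
  have h1ne0 : (1 : Fin (n+2)) ≠ 0 := Fin.ne_of_val_ne (by simp)
  have hprod : ∀ (j : Fin (n+2)) (S : Finset (Fin (n+2))), j ∉ S →
      (∏ l ∈ S, (t j - t l)) ≠ 0 := by
    intro j S hj
    rw [Finset.prod_ne_zero_iff]
    intro l hl
    exact sub_ne_zero.mpr fun h => hj ((hinj h) ▸ hl)
  have h10 : t 1 - t 0 ≠ 0 := sub_ne_zero.mpr fun h => h1ne0 (hinj h)
  rw [eq_div_iff h10, divDiff_comp_succAbove, divDiff_comp_succAbove]
  have h01 : (Finset.univ.erase (1 : Fin (n+2))).erase 0 =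
      (Finset.univ.erase (0 : Fin (n+2))).erase 1 := Finset.erase_right_comm
  have hmem1 : (1 : Fin (n+2)) ∈ Finset.univ.erase (0 : Fin (n+2)) := by
    simp [Finset.mem_erase, h1ne0]
  have hmem0 : (0 : Fin (n+2)) ∈ Finset.univ.erase (1 : Fin (n+2)) := by
    simp [Finset.mem_erase, Ne.symm h1ne0]
  rw [← Finset.add_sum_erase _ _ hmem1, ← Finset.add_sum_erase _ _ hmem0, h01]
  have hLHS : divDiff f t =
      f (t 0) / ∏ l ∈ Finset.univ.erase 0, (t 0 - t l) +
      (f (t 1) / ∏ l ∈ Finset.univ.erase 1, (t 1 - t l) +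
        ∑ j ∈ (Finset.univ.erase (0:Fin (n+2))).erase 1,
          f (t j) / ∏ l ∈ Finset.univ.erase j, (t j - t l)) := by
    rw [divDiff, ← Finset.add_sum_erase _ _ (Finset.mem_univ (0 : Fin (n+2))),
      ← Finset.add_sum_erase _ _ hmem1]
  rw [hLHS]
  have q0 : (∏ l ∈ Finset.univ.erase 0, (t 0 - t l)) =
      (t 0 - t 1) * ∏ l ∈ (Finset.univ.erase (0:Fin (n+2))).erase 1, (t 0 - t l) :=
    (Finset.mul_prod_erase _ (fun l => t 0 - t l) hmem1).symm
  have q1 : (∏ l ∈ Finset.univ.erase 1, (t 1 - t l)) =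
      (t 1 - t 0) * ∏ l ∈ (Finset.univ.erase (0:Fin (n+2))).erase 1, (t 1 - t l) := by
    rw [← h01]
    exact (Finset.mul_prod_erase _ (fun l => t 1 - t l) hmem0).symm
  have e0 : f (t 0) / (∏ l ∈ Finset.univ.erase 0, (t 0 - t l)) * (t 1 - t 0) =
      -(f (t 0) / ∏ l ∈ (Finset.univ.erase (0:Fin (n+2))).erase 1, (t 0 - t l)) := by
    have hP := hprod 0 ((Finset.univ.erase (0:Fin (n+2))).erase 1) (by simp)
    have h01' : t 0 - t 1 ≠ 0 := sub_ne_zero.mpr fun h => h1ne0 (hinj h.symm)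
    have habs : t 1 - t 0 = -(t 0 - t 1) := by ring
    rw [q0, habs, fieldAux0 _ _ _ h01' hP]
  have e1 : f (t 1) / (∏ l ∈ Finset.univ.erase 1, (t 1 - t l)) * (t 1 - t 0) =
      f (t 1) / ∏ l ∈ (Finset.univ.erase (0:Fin (n+2))).erase 1, (t 1 - t l) := by
    have hP := hprod 1 ((Finset.univ.erase (0:Fin (n+2))).erase 1) (by simp [h1ne0])
    rw [q1, fieldAux1 _ _ _ h10 hP]
  have eE : ∀ j ∈ (Finset.univ.erase (0:Fin (n+2))).erase 1,
      f (t j) / (∏ l ∈ Finset.univ.erase j, (t j - t l)) * (t 1 - t 0) =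
      f (t j) / ∏ l ∈ (Finset.univ.erase j).erase 0, (t j - t l) -
      f (t j) / ∏ l ∈ (Finset.univ.erase j).erase 1, (t j - t l) := by
    intro j hj
    have hj1 : j ≠ 1 := (Finset.mem_erase.mp hj).1
    have hj0 : j ≠ 0 := (Finset.mem_erase.mp (Finset.mem_erase.mp hj).2).1
    have hm0 : (0 : Fin (n+2)) ∈ Finset.univ.erase j := by simp [Ne.symm hj0]
    have hm1 : (1 : Fin (n+2)) ∈ (Finset.univ.erase j).erase 0 := by
      simp [Finset.mem_erase, Ne.symm hj1, h1ne0]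
    have hm0' : (0 : Fin (n+2)) ∈ (Finset.univ.erase j).erase 1 := by
      simp [Finset.mem_erase, Ne.symm hj0, Ne.symm h1ne0]
    have hcomm : ((Finset.univ.erase j).erase 1).erase 0
        = ((Finset.univ.erase j).erase 0).erase 1 := Finset.erase_right_comm
    have qj0 : (∏ l ∈ (Finset.univ.erase j).erase 0, (t j - t l)) =
        (t j - t 1) * ∏ l ∈ ((Finset.univ.erase j).erase 0).erase 1, (t j - t l) :=
      (Finset.mul_prod_erase _ (fun l => t j - t l) hm1).symm
    have qj1 : (∏ l ∈ (Finset.univ.erase j).erase 1, (t j - t l)) =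
        (t j - t 0) * ∏ l ∈ ((Finset.univ.erase j).erase 0).erase 1, (t j - t l) := by
      rw [← hcomm]
      exact (Finset.mul_prod_erase _ (fun l => t j - t l) hm0').symm
    have qj : (∏ l ∈ Finset.univ.erase j, (t j - t l)) =
        (t j - t 0) * ((t j - t 1) * ∏ l ∈ ((Finset.univ.erase j).erase 0).erase 1, (t j - t l)) := by
      rw [← qj0]
      exact (Finset.mul_prod_erase _ (fun l => t j - t l) hm0).symm
    have ha : t j - t 0 ≠ 0 := sub_ne_zero.mpr fun h => hj0 (hinj h)
    have hb : t j - t 1 ≠ 0 := sub_ne_zero.mpr fun h => hj1 (hinj h)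
    have hR := hprod j (((Finset.univ.erase j).erase 0).erase 1) (by simp)
    have hab : t 1 - t 0 = (t j - t 0) - (t j - t 1) := by ring
    rw [qj, qj0, qj1, hab, fieldAux2 _ _ _ _ ha hb hR]
  have hsum : (∑ j ∈ (Finset.univ.erase (0:Fin (n+2))).erase 1,
        f (t j) / ∏ l ∈ Finset.univ.erase j, (t j - t l)) * (t 1 - t 0) =
      (∑ j ∈ (Finset.univ.erase (0:Fin (n+2))).erase 1,
        f (t j) / ∏ l ∈ (Finset.univ.erase j).erase 0, (t j - t l)) -
      ∑ j ∈ (Finset.univ.erase (0:Fin (n+2))).erase 1,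
        f (t j) / ∏ l ∈ (Finset.univ.erase j).erase 1, (t j - t l) := by
    rw [Finset.sum_mul, ← Finset.sum_sub_distrib]
    exact Finset.sum_congr rfl eE
  linear_combination e0 + e1 + hsum

lemma contOn_dot {n : ℕ} {h : ℝ → ℝ} (hc : ContinuousOn h (Ioi 0)) {t : Fin (n+1) → ℝ}
    (ht : ∀ k, 0 < t k) : ContinuousOn (fun s : Fin n → ℝ => h (dot t s)) (Spx n) :=
  hc.comp (continuous_dot t).continuousOn (fun s hs => dot_pos ht hs)

lemma integrableOn_dot {n : ℕ} {h : ℝ → ℝ} (hc : ContinuousOn h (Ioi 0)) {t : Fin (n+1) → ℝ}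
    (ht : ∀ k, 0 < t k) : IntegrableOn (fun s : Fin n → ℝ => h (dot t s)) (Spx n) :=
  (contOn_dot hc ht).integrableOn_compact (isCompact_Spx n)

lemma Spx_zero : Spx 0 = Set.univ := by
  ext s; simp [Spx]

lemma dot_zero (t : Fin 1 → ℝ) (s : Fin 0 → ℝ) : dot t s = t 0 := by
  rw [dot_eq]; simp

lemma cons_mem_Spx_iff {n : ℕ} (u : ℝ) (s' : Fin n → ℝ) :
    Fin.cons u s' ∈ Spx (n+1) ↔ (0 ≤ u ∧ ∀ i, 0 ≤ s' i) ∧ u + ∑ i, s' i ≤ 1 := by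
  simp [Spx, Fin.forall_fin_succ, Fin.sum_cons]

lemma sA1_zero {n : ℕ} : (1 : Fin (n+2)).succAbove 0 = 0 := by
  rw [Fin.succAbove_of_castSucc_lt]
  · rfl
  · simp [Fin.lt_def]

lemma sA1_succ {n : ℕ} (i : Fin n) : (1 : Fin (n+2)).succAbove i.succ = i.succ.succ := by
  rw [Fin.succAbove_of_le_castSucc]
  simp [Fin.le_def]

lemma dot_cons {n : ℕ} (t : Fin (n+2) → ℝ) (u : ℝ) (s' : Fin n → ℝ) :
    dot t (Fin.cons u s') = dot (t ∘ Fin.succAbove 1) s' + u * (t 1 - t 0) := by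
  rw [dot_eq, dot_eq, Fin.sum_cons, Fin.sum_univ_succ]
  simp only [Fin.cons_zero, Fin.cons_succ, Function.comp_apply, sA1_zero, sA1_succ,
    Fin.succ_zero_eq_one]
  ring

lemma dot_sA0 {n : ℕ} (t : Fin (n+2) → ℝ) (s' : Fin n → ℝ) :
    dot (t ∘ Fin.succAbove 0) s'
      = dot (t ∘ Fin.succAbove 1) s' + (1 - ∑ i, s' i) * (t 1 - t 0) := by
  rw [dot_eq, dot_eq]
  simp only [Function.comp_apply, sA1_zero, sA1_succ, Fin.succAbove_zero,
    Fin.succ_zero_eq_one]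
  ring

lemma innerEval {n : ℕ} {F0 F1 : ℝ → ℝ}
    (hd : ∀ u : ℝ, 0 < u → HasDerivAt F1 (F0 u) u)
    (hcF0 : ContinuousOn F0 (Set.Ioi 0))
    {t : Fin (n+2) → ℝ} (ht : ∀ j, 0 < t j) (hcne : t 1 - t 0 ≠ 0) (s' : Fin n → ℝ) :
    ∫ u : ℝ, (Spx (n+1)).indicator (fun x => F0 (dot t x)) (Fin.cons u s')
      = (Spx n).indicator (fun s' => (F1 (dot (t ∘ Fin.succAbove 0) s')
          - F1 (dot (t ∘ Fin.succAbove 1) s')) / (t 1 - t 0)) s' := by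
  by_cases hs' : s' ∈ Spx n
  · have hL : 0 ≤ 1 - ∑ i, s' i := by
      have := hs'.2; linarith
    set L := 1 - ∑ i, s' i with hLdef
    set A := dot (t ∘ Fin.succAbove 1) s' with hA
    set c := t 1 - t 0 with hc
    have hmemIcc : ∀ u, Fin.cons u s' ∈ Spx (n+1) ↔ u ∈ Set.Icc 0 L := by
      intro u
      rw [cons_mem_Spx_iff]
      constructor
      · rintro ⟨⟨hu, -⟩, hsum⟩
        exact ⟨hu, by simp only [hLdef]; linarith⟩
      · rintro ⟨hu0, huL⟩
        refine ⟨⟨hu0, hs'.1⟩, by simp only [hLdef] at huL; linarith⟩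
    have hind : (fun u => (Spx (n+1)).indicator (fun x => F0 (dot t x)) (Fin.cons u s'))
        = (Set.Icc 0 L).indicator (fun u => F0 (A + u * c)) := by
      funext u
      by_cases hu : u ∈ Set.Icc 0 L
      · rw [Set.indicator_of_mem ((hmemIcc u).mpr hu), Set.indicator_of_mem hu, dot_cons]
      · rw [Set.indicator_of_notMem (fun hm => hu ((hmemIcc u).mp hm)),
          Set.indicator_of_notMem hu]
    rw [hind, integral_indicator measurableSet_Icc, integral_Icc_eq_integral_Ioc,
      ← intervalIntegral.integral_of_le hL]
    have hpos : ∀ u ∈ Set.uIcc 0 L, 0 < A + u * c := by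
      intro u hu
      rw [Set.uIcc_of_le hL] at hu
      have hmem : Fin.cons u s' ∈ Spx (n+1) := (hmemIcc u).mpr hu
      have := dot_pos ht hmem
      rwa [dot_cons] at this
    have hderiv : ∀ u ∈ Set.uIcc 0 L,
        HasDerivAt (fun u => F1 (A + u * c) / c) (F0 (A + u * c)) u := by
      intro u hu
      have h1 : HasDerivAt (fun u : ℝ => A + u * c) c u := by
        simpa using ((hasDerivAt_id u).mul_const c).const_add A
      have h2 := (hd _ (hpos u hu)).comp u h1
      have h3 := h2.div_const c
      simpa [mul_div_cancel_right₀ _ hcne] using h3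
    have hii : IntervalIntegrable (fun u => F0 (A + u * c)) volume 0 L := by
      apply ContinuousOn.intervalIntegrable
      exact hcF0.comp (by fun_prop) (fun u hu => hpos u hu)
    rw [intervalIntegral.integral_eq_sub_of_hasDerivAt hderiv hii,
      Set.indicator_of_mem hs']
    have e1 : dot (t ∘ Fin.succAbove 0) s' = A + L * c := by
      rw [dot_sA0, hA, hLdef, hc]
    rw [e1, show A + 0 * c = A by ring, sub_div]
  · have h0 : ∀ u, (Spx (n+1)).indicator (fun x => F0 (dot t x)) (Fin.cons u s') = 0 := by
      intro u
      apply Set.indicator_of_notMem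
      intro hm
      rw [cons_mem_Spx_iff] at hm
      refine hs' ⟨hm.1.2, ?_⟩
      have := hm.1.1
      have := hm.2
      linarith
    simp only [h0]
    rw [integral_zero, Set.indicator_of_notMem hs']

theorem HG : ∀ (n : ℕ) (F : ℕ → ℝ → ℝ),
    (∀ k, k < n → ∀ u : ℝ, 0 < u → HasDerivAt (F (k+1)) (F k u) u) →
    (∀ k, k ≤ n → ContinuousOn (F k) (Set.Ioi 0)) →
    ∀ (t : Fin (n+1) → ℝ), (∀ j, 0 < t j) → Function.Injective t →
    (∫ s in Spx n, F 0 (dot t s)) = divDiff (F n) t := by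
  intro n
  induction n with
  | zero =>
    intro F _ _ t ht _
    rw [Spx_zero, Measure.restrict_univ]
    have hconst : (fun s : Fin 0 → ℝ => F 0 (dot t s)) = fun _ => F 0 (t 0) := by
      funext s; rw [dot_zero]
    rw [hconst, integral_const]
    have hvol : (volume : Measure (Fin 0 → ℝ)) Set.univ = 1 := by
      rw [MeasureTheory.volume_pi, Measure.pi_univ]; simp
    rw [measureReal_def, hvol]
    have hdd : divDiff (F 0) t = F 0 (t 0) := by
      have : (Finset.univ.erase (0 : Fin 1)) = ∅ := by decide
      simp [divDiff, Fin.sum_univ_one, this]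
    rw [hdd]
    simp
  | succ n IH =>
    intro F hder hcont t ht hinj
    have h1ne0 : (1 : Fin (n+2)) ≠ 0 := Fin.ne_of_val_ne (by simp)
    have hcne : t 1 - t 0 ≠ 0 := sub_ne_zero.mpr fun h => h1ne0 (hinj h)
    have hsymm : ∀ p : ℝ × (Fin n → ℝ),
        (MeasurableEquiv.piFinSuccAbove (fun _ : Fin (n+1) => ℝ) 0).symm p
          = Fin.cons p.1 p.2 := by
      intro p; simp [MeasurableEquiv.piFinSuccAbove, Fin.consEquiv]
    have hint : IntegrableOn (fun x => F 0 (dot t x)) (Spx (n+1)) :=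
      integrableOn_dot (hcont 0 (by omega)) ht
    have hindint : Integrable ((Spx (n+1)).indicator (fun x => F 0 (dot t x))) :=
      (integrable_indicator_iff (measurableSet_Spx _)).mpr hint
    have hmp := (MeasureTheory.volume_preserving_piFinSuccAbove
      (fun _ : Fin (n+1) => ℝ) 0).symm
    have hb : (∫ x, (Spx (n+1)).indicator (fun x => F 0 (dot t x)) x)
        = ∫ p : ℝ × (Fin n → ℝ),
            (Spx (n+1)).indicator (fun x => F 0 (dot t x)) (Fin.cons p.1 p.2) := by
      rw [← hmp.integral_comp (MeasurableEquiv.measurableEmbedding _)]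
      congr 1
      funext p
      rw [hsymm]
    have hintp : Integrable (fun p : ℝ × (Fin n → ℝ) =>
        (Spx (n+1)).indicator (fun x => F 0 (dot t x)) (Fin.cons p.1 p.2)) := by
      have h2 := (hmp.integrable_comp_emb (MeasurableEquiv.measurableEmbedding _)).mpr hindint
      have : ((Spx (n+1)).indicator (fun x => F 0 (dot t x)) ∘
          (MeasurableEquiv.piFinSuccAbove (fun _ : Fin (n+1) => ℝ) 0).symm)
          = fun p : ℝ × (Fin n → ℝ) =>
            (Spx (n+1)).indicator (fun x => F 0 (dot t x)) (Fin.cons p.1 p.2) := by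
        funext p; simp only [Function.comp_apply, hsymm]
      rwa [this] at h2
    have hfub : (∫ p : ℝ × (Fin n → ℝ),
          (Spx (n+1)).indicator (fun x => F 0 (dot t x)) (Fin.cons p.1 p.2))
        = ∫ s' : Fin n → ℝ, ∫ u : ℝ,
            (Spx (n+1)).indicator (fun x => F 0 (dot t x)) (Fin.cons u s') := by
      exact integral_prod_symm _ hintp
    have hinner : ∀ s' : Fin n → ℝ,
        (∫ u : ℝ, (Spx (n+1)).indicator (fun x => F 0 (dot t x)) (Fin.cons u s'))
          = (Spx n).indicator (fun s' => (F 1 (dot (t ∘ Fin.succAbove 0) s')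
              - F 1 (dot (t ∘ Fin.succAbove 1) s')) / (t 1 - t 0)) s' :=
      innerEval (hder 0 (by omega)) (hcont 0 (by omega)) ht hcne
    have ht0 : ∀ j, 0 < (t ∘ Fin.succAbove 0) j := fun j => ht _
    have ht1 : ∀ j, 0 < (t ∘ Fin.succAbove 1) j := fun j => ht _
    have hinj0 : Function.Injective (t ∘ Fin.succAbove 0) :=
      hinj.comp Fin.succAbove_right_injective
    have hinj1 : Function.Injective (t ∘ Fin.succAbove 1) :=
      hinj.comp Fin.succAbove_right_injective
    have hi0 : IntegrableOn (fun s' : Fin n → ℝ => F 1 (dot (t ∘ Fin.succAbove 0) s')) (Spx n) :=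
      integrableOn_dot (hcont 1 (by omega)) ht0
    have hi1 : IntegrableOn (fun s' : Fin n → ℝ => F 1 (dot (t ∘ Fin.succAbove 1) s')) (Spx n) :=
      integrableOn_dot (hcont 1 (by omega)) ht1
    calc (∫ s in Spx (n+1), F 0 (dot t s))
        = ∫ x, (Spx (n+1)).indicator (fun x => F 0 (dot t x)) x :=
          (integral_indicator (measurableSet_Spx _)).symm
      _ = ∫ p : ℝ × (Fin n → ℝ),
            (Spx (n+1)).indicator (fun x => F 0 (dot t x)) (Fin.cons p.1 p.2) := hb
      _ = ∫ s' : Fin n → ℝ, ∫ u : ℝ,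
            (Spx (n+1)).indicator (fun x => F 0 (dot t x)) (Fin.cons u s') := hfub
      _ = ∫ s' : Fin n → ℝ, (Spx n).indicator
            (fun s' => (F 1 (dot (t ∘ Fin.succAbove 0) s')
              - F 1 (dot (t ∘ Fin.succAbove 1) s')) / (t 1 - t 0)) s' := by
          congr 1; funext s'; exact hinner s'
      _ = ∫ s' in Spx n, (F 1 (dot (t ∘ Fin.succAbove 0) s')
              - F 1 (dot (t ∘ Fin.succAbove 1) s')) / (t 1 - t 0) :=
          integral_indicator (measurableSet_Spx _)
      _ = ((∫ s' in Spx n, F 1 (dot (t ∘ Fin.succAbove 0) s'))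
            - ∫ s' in Spx n, F 1 (dot (t ∘ Fin.succAbove 1) s')) / (t 1 - t 0) := by
          rw [integral_div, integral_sub hi0 hi1]
      _ = (divDiff (F (n+1)) (t ∘ Fin.succAbove 0)
            - divDiff (F (n+1)) (t ∘ Fin.succAbove 1)) / (t 1 - t 0) := by
          rw [IH (fun k => F (k+1)) (fun k hk => hder (k+1) (by omega))
              (fun k hk => hcont (k+1) (by omega)) _ ht0 hinj0,
            IH (fun k => F (k+1)) (fun k hk => hder (k+1) (by omega))
              (fun k hk => hcont (k+1) (by omega)) _ ht1 hinj1]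
      _ = divDiff (F (n+1)) t := (divDiff_rec _ t hinj).symm

/-- The parametric integral. -/
noncomputable def J (n : ℕ) (γ : Fin (n+1) → ℕ) (h : ℝ → ℝ) (t : Fin (n+1) → ℝ) : ℝ :=
  ∫ s in Spx n, (∏ k, wt s k ^ γ k) * h (dot t s)

/-- Open set of positive injective node vectors. -/
def U (n : ℕ) : Set (Fin (n+1) → ℝ) := {y | (∀ i, 0 < y i) ∧ Function.Injective y}

lemma isOpen_U (n : ℕ) : IsOpen (U n) := by
  have h1 : IsOpen {y : Fin (n+1) → ℝ | ∀ i, 0 < y i} := by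
    have : {y : Fin (n+1) → ℝ | ∀ i, 0 < y i} = ⋂ i, {y | 0 < y i} := by ext; simp
    rw [this]
    exact isOpen_iInter_of_finite fun i =>
      isOpen_lt continuous_const (continuous_apply i)
  have h2 : IsOpen {y : Fin (n+1) → ℝ | Function.Injective y} := by
    have : {y : Fin (n+1) → ℝ | Function.Injective y}
        = ⋂ (i) (j), {y : Fin (n+1) → ℝ | i ≠ j → y i ≠ y j} := by
      ext y
      simp only [Set.mem_iInter, Set.mem_setOf_eq]
      constructor
      · intro hy i j hij h; exact hij (hy h)
      · intro hy a b hab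
        by_contra hne
        exact hy a b hne hab
    rw [this]
    refine isOpen_iInter_of_finite fun i => isOpen_iInter_of_finite fun j => ?_
    by_cases hij : i = j
    · simp [hij]
    · have : {y : Fin (n+1) → ℝ | i ≠ j → y i ≠ y j} = {y | y i ≠ y j} := by
        ext y; simp [hij]
      rw [this]
      exact isOpen_ne_fun (continuous_apply i) (continuous_apply j)
  exact h1.inter h2

lemma prod_wt_update {n : ℕ} (γ : Fin (n+1) → ℕ) (j : Fin (n+1)) (s : Fin n → ℝ) :
    (∏ k, wt s k ^ (Function.update γ j (γ j + 1)) k) = wt s j * ∏ k, wt s k ^ γ k := by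
  rw [← Finset.mul_prod_erase Finset.univ (fun k => wt s k ^ (Function.update γ j (γ j + 1)) k)
      (Finset.mem_univ j),
    ← Finset.mul_prod_erase Finset.univ (fun k => wt s k ^ γ k) (Finset.mem_univ j)]
  rw [Function.update_self, pow_succ]
  rw [Finset.prod_congr rfl (fun k hk => by
    rw [Function.update_of_ne (Finset.ne_of_mem_erase hk)])]
  ring

lemma dot_update {n : ℕ} (y : Fin (n+1) → ℝ) (j : Fin (n+1)) (τ : ℝ) (s : Fin n → ℝ) :
    dot (Function.update y j τ) s
      = (∑ k ∈ Finset.univ.erase j, wt s k * y k) + wt s j * τ := by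
  rw [dot, ← Finset.add_sum_erase _ _ (Finset.mem_univ j), Function.update_self]
  rw [Finset.sum_congr rfl (fun k hk => by
    rw [Function.update_of_ne (Finset.ne_of_mem_erase hk)])]
  ring

lemma abs_prod_wt_le_one {n : ℕ} (γ : Fin (n+1) → ℕ) {s : Fin n → ℝ} (hs : s ∈ Spx n) :
    |∏ k, wt s k ^ γ k| ≤ 1 := by
  rw [abs_of_nonneg (Finset.prod_nonneg fun k _ => pow_nonneg (wt_nonneg hs k) _)]
  exact Finset.prod_le_one (fun k _ => pow_nonneg (wt_nonneg hs k) _)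
    (fun k _ => pow_le_one₀ (wt_nonneg hs k) (wt_le_one hs k))

theorem hasDerivAt_J {n : ℕ} (γ : Fin (n+1) → ℕ) {H H' : ℝ → ℝ}
    (hH : ∀ u : ℝ, 0 < u → HasDerivAt H (H' u) u)
    (hHc : ContinuousOn H (Ioi 0)) (hH'c : ContinuousOn H' (Ioi 0))
    (j : Fin (n+1)) {y : Fin (n+1) → ℝ} (hy : ∀ i, 0 < y i) :
    HasDerivAt (fun τ => J n γ H (Function.update y j τ))
      (J n (Function.update γ j (γ j + 1)) H' y) (y j) := by
  classical
  have hne : (Finset.univ : Finset (Fin (n+1))).Nonempty := ⟨j, Finset.mem_univ j⟩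
  set m := Finset.univ.inf' hne y with hm
  set M := Finset.univ.sup' hne y with hM
  have hmy : ∀ i, m ≤ y i := fun i => Finset.inf'_le y (Finset.mem_univ i)
  have hyM : ∀ i, y i ≤ M := fun i => Finset.le_sup' y (Finset.mem_univ i)
  have hmpos : 0 < m := by
    obtain ⟨i₀, -, hi₀⟩ := Finset.exists_mem_eq_inf' hne y
    rw [hm, hi₀]; exact hy i₀
  have hmM : m ≤ M := le_trans (hmy j) (hyM j)
  have hball : ∀ τ ∈ Metric.ball (y j) (m/2), m/2 ≤ τ ∧ τ ≤ 2*M := by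
    intro τ hτ
    rw [Metric.mem_ball, Real.dist_eq, abs_lt] at hτ
    constructor
    · have := hmy j; linarith [hτ.1]
    · have := hyM j; linarith [hτ.2, hmpos]
  have hupd : ∀ τ ∈ Metric.ball (y j) (m/2), ∀ i, m/2 ≤ Function.update y j τ i ∧
      Function.update y j τ i ≤ 2*M := by
    intro τ hτ i
    rcases eq_or_ne i j with rfl | hij
    · rw [Function.update_self]; exact hball τ hτ
    · rw [Function.update_of_ne hij]
      exact ⟨le_trans (by linarith) (hmy i), le_trans (hyM i) (by linarith)⟩
  have hupd_pos : ∀ τ ∈ Metric.ball (y j) (m/2), ∀ i, 0 < Function.update y j τ i :=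
    fun τ hτ i => lt_of_lt_of_le (by linarith) (hupd τ hτ i).1
  -- bound for H' on [m/2, 2M]
  obtain ⟨C, hC⟩ := (isCompact_Icc (a := m/2) (b := 2*M)).exists_bound_of_continuousOn
    (hH'c.mono (fun x hx => lt_of_lt_of_le (by linarith) hx.1))
  set μ := volume.restrict (Spx n)
  set F : ℝ → (Fin n → ℝ) → ℝ :=
    fun τ s => (∏ k, wt s k ^ γ k) * H (dot (Function.update y j τ) s) with hF
  set F' : ℝ → (Fin n → ℝ) → ℝ :=
    fun τ s => (∏ k, wt s k ^ γ k) * (wt s j * H' (dot (Function.update y j τ) s)) with hF'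
  have hmeas : ∀ τ ∈ Metric.ball (y j) (m/2), AEStronglyMeasurable (F τ) μ := by
    intro τ hτ
    exact (contOn_integrand γ hHc (hupd_pos τ hτ)).aestronglyMeasurable (measurableSet_Spx n)
  have hyball : y j ∈ Metric.ball (y j) (m/2) := Metric.mem_ball_self (by linarith)
  have key := hasDerivAt_integral_of_dominated_loc_of_deriv_le (s := Metric.ball (y j) (m/2))
    (F := F) (F' := F') (x₀ := y j) (bound := fun _ => C) (μ := μ)
    (Metric.ball_mem_nhds _ (by linarith))
    (Filter.eventually_of_mem (Metric.ball_mem_nhds _ (by linarith)) hmeas)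
    (by
      have : F (y j) = fun s => (∏ k, wt s k ^ γ k) * H (dot y s) := by
        funext s; rw [hF]; simp [Function.update_eq_self]
      rw [this]
      exact integrableOn_integrand γ hHc hy)
    (by
      have hcont' : ContinuousOn (fun s : Fin n → ℝ =>
          (∏ k, wt s k ^ (Function.update γ j (γ j + 1)) k) * H' (dot y s)) (Spx n) :=
        contOn_integrand _ hH'c hy
      have : F' (y j) = fun s => (∏ k, wt s k ^ (Function.update γ j (γ j + 1)) k)
          * H' (dot y s) := by
        funext s
        rw [hF', prod_wt_update]
        simp [Function.update_eq_self]
        ring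
      rw [this]
      exact hcont'.aestronglyMeasurable (measurableSet_Spx n))
    (by
      refine (ae_restrict_mem (measurableSet_Spx n)).mono fun s hs => ?_
      intro τ hτ
      have hdotpos : 0 < dot (Function.update y j τ) s := dot_pos (hupd_pos τ hτ) hs
      have hdotIcc : dot (Function.update y j τ) s ∈ Icc (m/2) (2*M) :=
        ⟨le_dot hs (fun i => (hupd τ hτ i).1), dot_le hs (fun i => (hupd τ hτ i).2)⟩
      have h1 : ‖F' τ s‖ = |∏ k, wt s k ^ γ k| * (|wt s j| * |H' (dot (Function.update y j τ) s)|) := by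
        rw [hF', Real.norm_eq_abs, abs_mul, abs_mul]
      rw [h1]
      have h2 : |H' (dot (Function.update y j τ) s)| ≤ C := hC _ hdotIcc
      have h3 : |wt s j| ≤ 1 := by
        rw [abs_of_nonneg (wt_nonneg hs j)]; exact wt_le_one hs j
      have h4 := abs_prod_wt_le_one γ hs
      have hC0 : 0 ≤ C := le_trans (abs_nonneg _) h2
      calc |∏ k, wt s k ^ γ k| * (|wt s j| * |H' (dot (Function.update y j τ) s)|)
          ≤ 1 * (1 * C) := by
            refine mul_le_mul h4 ?_ (by positivity) (by norm_num)
            exact mul_le_mul h3 h2 (abs_nonneg _) (by norm_num)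
        _ = C := by ring)
    (MeasureTheory.integrableOn_const (isCompact_Spx n).measure_lt_top.ne)
    (by
      refine (ae_restrict_mem (measurableSet_Spx n)).mono fun s hs => ?_
      intro τ hτ
      have hdotpos : 0 < dot (Function.update y j τ) s := dot_pos (hupd_pos τ hτ) hs
      have hlin : HasDerivAt (fun τ : ℝ => dot (Function.update y j τ) s) (wt s j) τ := by
        have h0 : (fun τ : ℝ => dot (Function.update y j τ) s)
            = fun τ => (∑ k ∈ Finset.univ.erase j, wt s k * y k) + wt s j * τ := by
          funext τ'; rw [dot_update]
        rw [h0]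
        simpa using ((hasDerivAt_id τ).const_mul (wt s j)).const_add
          (∑ k ∈ Finset.univ.erase j, wt s k * y k)
      have hcomp := (hH _ hdotpos).comp τ hlin
      simp only [Function.comp_def] at hcomp
      have hfin := hcomp.const_mul (∏ k, wt s k ^ γ k)
      rw [hF, hF']
      exact hfin.congr_deriv (by ring))
  have hfinal := key.2
  have : (∫ s, F' (y j) s ∂μ) = J n (Function.update γ j (γ j + 1)) H' y := by
    rw [J]
    refine integral_congr_ae (Filter.Eventually.of_forall fun s => ?_)
    simp only [hF', prod_wt_update, Function.update_eq_self]
    ring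
  rw [this] at hfinal
  have hJeq : (fun τ => ∫ s, F τ s ∂μ) = fun τ => J n γ H (Function.update y j τ) := rfl
  rw [hJeq] at hfinal
  exact hfinal

lemma continuous_update_coord {n : ℕ} (y : Fin (n+1) → ℝ) (j : Fin (n+1)) :
    Continuous (fun τ : ℝ => Function.update y j τ) := by
  refine continuous_pi fun i => ?_
  rcases eq_or_ne i j with rfl | hij
  · simpa [Function.update_self] using continuous_id'
  · simpa [Function.update_of_ne hij] using (continuous_const : Continuous fun _ : ℝ => y i)

lemma pd_iter {n : ℕ} {Hfam : ℕ → ℝ → ℝ}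
    (hder : ∀ m, ∀ u : ℝ, 0 < u → HasDerivAt (Hfam m) (Hfam (m+1) u) u)
    (hcont : ∀ m, ContinuousOn (Hfam m) (Ioi 0))
    (j : Fin (n+1)) (r : ℕ) :
    ∀ (γ : Fin (n+1) → ℕ) (m : ℕ) (F : (Fin (n+1) → ℝ) → ℝ),
      (∀ y ∈ U n, F y = J n γ (Hfam m) y) →
      ∀ y ∈ U n, (pdCoord j)^[r] F y
        = J n (Function.update γ j (γ j + r)) (Hfam (m+r)) y := by
  induction r with
  | zero =>
    intro γ m F hF y hy
    simpa [Function.update_eq_self] using hF y hy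
  | succ r IH =>
    intro γ m F hF y hy
    rw [Function.iterate_succ_apply']
    set G := (pdCoord j)^[r] F with hG
    have hGy : ∀ y ∈ U n, G y = J n (Function.update γ j (γ j + r)) (Hfam (m+r)) y :=
      IH γ m F hF
    have hyU := hy
    obtain ⟨hypos, hyinj⟩ := hy
    -- eventual equality near y j
    have hev : (fun τ => G (Function.update y j τ))
        =ᶠ[nhds (y j)] (fun τ => J n (Function.update γ j (γ j + r)) (Hfam (m+r))
          (Function.update y j τ)) := by
      have hopen : IsOpen ((fun τ : ℝ => Function.update y j τ) ⁻¹' (U n)) :=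
        (isOpen_U n).preimage (continuous_update_coord y j)
      have hmem : y j ∈ (fun τ : ℝ => Function.update y j τ) ⁻¹' (U n) := by
        simp only [Set.mem_preimage, Function.update_eq_self]
        exact hyU
      filter_upwards [hopen.mem_nhds hmem] with τ hτ
      exact hGy _ hτ
    rw [pdCoord, hev.deriv_eq]
    have hder' := hasDerivAt_J (Function.update γ j (γ j + r))
      (hder (m+r)) (hcont (m+r)) (hcont (m+r+1)) j hypos
    rw [hder'.deriv]
    have h1 : Function.update (Function.update γ j (γ j + r)) j
        (Function.update γ j (γ j + r) j + 1) = Function.update γ j (γ j + (r+1)) := by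
      rw [Function.update_self, Function.update_idem, Nat.add_assoc]
    have h2 : m + r + 1 = m + (r + 1) := by omega
    rw [h1, h2]

lemma pd_foldr {n : ℕ} {Hfam : ℕ → ℝ → ℝ}
    (hder : ∀ m, ∀ u : ℝ, 0 < u → HasDerivAt (Hfam m) (Hfam (m+1) u) u)
    (hcont : ∀ m, ContinuousOn (Hfam m) (Ioi 0)) (β : Fin (n+1) → ℕ) :
    ∀ (ℓ : List (Fin (n+1))) (γ : Fin (n+1) → ℕ) (m : ℕ) (F : (Fin (n+1) → ℝ) → ℝ),
      (∀ y ∈ U n, F y = J n γ (Hfam m) y) →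
      ∀ y ∈ U n, (ℓ.foldr (fun j G => (pdCoord j)^[β j] G) F) y
        = J n (fun i => γ i + ℓ.count i * β i) (Hfam (m + (ℓ.map β).sum)) y := by
  intro ℓ
  induction ℓ with
  | nil =>
    intro γ m F hF y hy
    simpa using hF y hy
  | cons j ℓ IH =>
    intro γ m F hF y hy
    simp only [List.foldr_cons]
    have hinner := IH γ m F hF
    have hkey := pd_iter hder hcont j (β j) _ _ _ hinner y hy
    rw [hkey]
    have h1 : Function.update (fun i => γ i + ℓ.count i * β i) j
        ((fun i => γ i + ℓ.count i * β i) j + β j)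
        = fun i => γ i + (j :: ℓ).count i * β i := by
      funext i
      rcases eq_or_ne i j with rfl | hij
      · rw [Function.update_self]
        simp [List.count_cons]
        ring
      · rw [Function.update_of_ne hij]
        simp [List.count_cons, hij, Ne.symm hij]
    have h2 : m + (ℓ.map β).sum + β j = m + ((j :: ℓ).map β).sum := by
      simp only [List.map_cons, List.sum_cons]
      omega
    rw [h1, h2]

lemma pdMulti_J {n : ℕ} {Hfam : ℕ → ℝ → ℝ}
    (hder : ∀ m, ∀ u : ℝ, 0 < u → HasDerivAt (Hfam m) (Hfam (m+1) u) u)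
    (hcont : ∀ m, ContinuousOn (Hfam m) (Ioi 0)) (β : Fin (n+1) → ℕ)
    (F : (Fin (n+1) → ℝ) → ℝ)
    (hF : ∀ y ∈ U n, F y = J n (fun _ => 0) (Hfam 0) y)
    {t : Fin (n+1) → ℝ} (htU : t ∈ U n) :
    pdMulti β F t = J n β (Hfam (∑ i, β i)) t := by
  rw [pdMulti]
  rw [pd_foldr hder hcont β (List.finRange (n+1)) (fun _ => 0) 0 F hF t htU]
  have h1 : (fun i => (0:ℕ) + (List.finRange (n+1)).count i * β i) = β := by
    funext i
    rw [List.count_eq_one_of_mem (List.nodup_finRange _) (List.mem_finRange i)]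
    ring
  have h2 : 0 + ((List.finRange (n+1)).map β).sum = ∑ i, β i := by
    rw [Fin.sum_univ_def]
    omega
  rw [h1, h2]


lemma chainStep (q : ℝ) (d : ℕ) (u : ℝ) (hu : 0 < u) :
    HasDerivAt (fun u : ℝ => (∏ i ∈ Finset.range d, (q - (i:ℝ))) * u ^ (q - (d:ℝ)))
      ((∏ i ∈ Finset.range (d+1), (q - (i:ℝ))) * u ^ (q - ((d:ℝ)+1))) u := by
  have hd := (Real.hasDerivAt_rpow_const (x := u) (p := q - (d:ℝ))
    (Or.inl (ne_of_gt hu))).const_mul (∏ i ∈ Finset.range d, (q - (i:ℝ)))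
  refine hd.congr_deriv ?_
  rw [Finset.prod_range_succ, show q - (d:ℝ) - 1 = q - ((d:ℝ)+1) by ring]
  ring

lemma chainLogPow (e : ℕ) (u : ℝ) (hu : 0 < u) :
    HasDerivAt (fun u : ℝ => (-1:ℝ)^e * (e.factorial : ℝ) * u ^ (-((e+1 : ℕ):ℝ)))
      ((-1:ℝ)^(e+1) * ((e+1).factorial : ℝ) * u ^ (-((e+2 : ℕ):ℝ))) u := by
  have hd := (Real.hasDerivAt_rpow_const (x := u) (p := -((e+1 : ℕ):ℝ))
    (Or.inl (ne_of_gt hu))).const_mul ((-1:ℝ)^e * (e.factorial : ℝ))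
  refine hd.congr_deriv ?_
  rw [show -((e+1:ℕ):ℝ) - 1 = -((e+2:ℕ):ℝ) by push_cast; ring]
  rw [pow_succ]
  push_cast [Nat.factorial_succ]
  ring

lemma logStep (u : ℝ) (hu : 0 < u) :
    HasDerivAt Real.log ((-1:ℝ)^0 * ((Nat.factorial 0 : ℕ):ℝ) * u ^ (-((1:ℕ):ℝ))) u := by
  have h := Real.hasDerivAt_log (ne_of_gt hu)
  convert h using 1
  simp [Real.rpow_neg_one]

lemma contOn_powc (c a : ℝ) : ContinuousOn (fun u : ℝ => c * u ^ a) (Ioi 0) :=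
  continuousOn_const.mul
    (ContinuousOn.rpow_const continuousOn_id (fun x hx => Or.inl (ne_of_gt hx)))

lemma contOn_log : ContinuousOn Real.log (Ioi 0) :=
  Real.continuousOn_log.mono (fun x hx => ne_of_gt hx)

noncomputable def Hpow (n : ℕ) (q : ℝ) (m : ℕ) : ℝ → ℝ :=
  fun u => (∏ i ∈ Finset.range (n+m), (q - (i:ℝ))) * u ^ (q - ((n+m : ℕ):ℝ))

noncomputable def Fpow (n : ℕ) (q : ℝ) (k : ℕ) : ℝ → ℝ :=
  fun u => (∏ i ∈ Finset.range (n-k), (q - (i:ℝ))) * u ^ (q - ((n-k : ℕ):ℝ))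

lemma Hpow_der (n : ℕ) (q : ℝ) :
    ∀ m, ∀ u : ℝ, 0 < u → HasDerivAt (Hpow n q m) (Hpow n q (m+1) u) u := by
  intro m u hu
  have h := chainStep q (n+m) u hu
  have h2 : Hpow n q (m+1) u
      = (∏ i ∈ Finset.range ((n+m)+1), (q - (i:ℝ))) * u ^ (q - ((((n+m):ℕ):ℝ) + 1)) := by
    unfold Hpow
    rw [show n + (m+1) = (n+m)+1 by omega]
    norm_num
  rw [show (Hpow n q m) = fun u : ℝ => (∏ i ∈ Finset.range (n+m), (q - (i:ℝ)))
    * u ^ (q - (((n+m) : ℕ):ℝ)) from rfl, h2]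
  exact h

lemma Fpow_der (n : ℕ) (q : ℝ) :
    ∀ k, k < n → ∀ u : ℝ, 0 < u → HasDerivAt (Fpow n q (k+1)) (Fpow n q k u) u := by
  intro k hk u hu
  have h := chainStep q (n-(k+1)) u hu
  have h2 : Fpow n q k u
      = (∏ i ∈ Finset.range ((n-(k+1))+1), (q - (i:ℝ))) * u ^ (q - ((((n-(k+1)):ℕ):ℝ) + 1)) := by
    unfold Fpow
    rw [show n - k = (n-(k+1))+1 by omega]
    norm_num
  rw [show Fpow n q (k+1) = fun u : ℝ => (∏ i ∈ Finset.range (n-(k+1)), (q - (i:ℝ)))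
    * u ^ (q - (((n-(k+1)) : ℕ):ℝ)) from rfl, h2]
  exact h

lemma Hpow_cont (n : ℕ) (q : ℝ) (m : ℕ) : ContinuousOn (Hpow n q m) (Ioi 0) :=
  contOn_powc _ _

lemma Fpow_cont (n : ℕ) (q : ℝ) (k : ℕ) : ContinuousOn (Fpow n q k) (Ioi 0) :=
  contOn_powc _ _

lemma J_zero {n : ℕ} (h : ℝ → ℝ) (t : Fin (n+1) → ℝ) :
    J n (fun _ => 0) h t = ∫ s in Spx n, h (dot t s) := by
  unfold J
  refine integral_congr_ae (Filter.Eventually.of_forall fun s => ?_)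
  simp

lemma divDiff_rpow_eq {n : ℕ} (q : ℝ) {y : Fin (n+1) → ℝ} (hy : ∀ i, 0 < y i)
    (hinj : Function.Injective y) :
    divDiff (fun u => u ^ q) y = J n (fun _ => 0) (Hpow n q 0) y := by
  have hHG := HG n (Fpow n q) (fun k hk => Fpow_der n q k hk)
    (fun k _ => Fpow_cont n q k) y hy hinj
  have hFn : Fpow n q n = fun u : ℝ => u ^ q := by
    funext u; unfold Fpow; simp
  have hF0 : Fpow n q 0 = Hpow n q 0 := by
    funext u; unfold Fpow Hpow; norm_num
  rw [J_zero, ← hF0, hHG, hFn]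

noncomputable def Hlog (n : ℕ) (m : ℕ) : ℝ → ℝ :=
  fun u => if n + m = 0 then Real.log u else
    (-1:ℝ)^(n+m-1) * ((n+m-1).factorial : ℝ) * u ^ (-((n+m : ℕ):ℝ))

noncomputable def Flog (n : ℕ) (k : ℕ) : ℝ → ℝ :=
  fun u => if k = n then Real.log u else
    (-1:ℝ)^(n-1-k) * ((n-1-k).factorial : ℝ) * u ^ (-((n-k : ℕ):ℝ))

lemma Hlog_der (n : ℕ) :
    ∀ m, ∀ u : ℝ, 0 < u → HasDerivAt (Hlog n m) (Hlog n (m+1) u) u := by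
  intro m u hu
  by_cases h : n + m = 0
  · have h1 : Hlog n m = Real.log := by
      funext v; unfold Hlog; rw [if_pos h]
    have h2 : Hlog n (m+1) u
        = (-1:ℝ)^0 * ((Nat.factorial 0 : ℕ):ℝ) * u ^ (-((1:ℕ):ℝ)) := by
      unfold Hlog
      rw [if_neg (by omega), show n+(m+1)-1 = 0 by omega, show n+(m+1) = 1 by omega]
    rw [h1, h2]
    exact logStep u hu
  · obtain ⟨e, he⟩ : ∃ e, n + m = e + 1 := ⟨n+m-1, by omega⟩
    have h1 : Hlog n m
        = fun u : ℝ => (-1:ℝ)^e * (e.factorial : ℝ) * u ^ (-((e+1 : ℕ):ℝ)) := by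
      funext v; unfold Hlog
      rw [if_neg h, show n+m-1 = e by omega, he]
    have h2 : Hlog n (m+1) u
        = (-1:ℝ)^(e+1) * ((e+1).factorial : ℝ) * u ^ (-((e+2 : ℕ):ℝ)) := by
      unfold Hlog
      rw [if_neg (by omega), show n+(m+1)-1 = e+1 by omega, show n+(m+1) = e+2 by omega]
    rw [h1, h2]
    exact chainLogPow e u hu

lemma Flog_der (n : ℕ) :
    ∀ k, k < n → ∀ u : ℝ, 0 < u → HasDerivAt (Flog n (k+1)) (Flog n k u) u := by
  intro k hk u hu
  by_cases hk1 : k + 1 = n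
  · have h2 : Flog n (k+1) = Real.log := by
      funext v; unfold Flog; rw [if_pos hk1]
    have h1 : Flog n k u
        = (-1:ℝ)^0 * ((Nat.factorial 0 : ℕ):ℝ) * u ^ (-((1:ℕ):ℝ)) := by
      unfold Flog
      rw [if_neg (by omega), show n-1-k = 0 by omega, show n-k = 1 by omega]
    rw [h2, h1]
    exact logStep u hu
  · obtain ⟨e, he⟩ : ∃ e, n - (k+1) = e + 1 := ⟨n-(k+1)-1, by omega⟩
    have h2 : Flog n (k+1)
        = fun u : ℝ => (-1:ℝ)^e * (e.factorial : ℝ) * u ^ (-((e+1 : ℕ):ℝ)) := by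
      funext v; unfold Flog
      rw [if_neg (by omega), show n-1-(k+1) = e by omega, he]
    have h1 : Flog n k u
        = (-1:ℝ)^(e+1) * ((e+1).factorial : ℝ) * u ^ (-((e+2 : ℕ):ℝ)) := by
      unfold Flog
      rw [if_neg (by omega), show n-1-k = e+1 by omega, show n-k = e+2 by omega]
    rw [h2, h1]
    exact chainLogPow e u hu

lemma Hlog_cont (n : ℕ) (m : ℕ) : ContinuousOn (Hlog n m) (Ioi 0) := by
  unfold Hlog
  by_cases h : n + m = 0
  · simp only [if_pos h]; exact contOn_log
  · simp only [if_neg h]; exact contOn_powc _ _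

lemma Flog_cont (n : ℕ) (k : ℕ) : ContinuousOn (Flog n k) (Ioi 0) := by
  unfold Flog
  by_cases h : k = n
  · simp only [if_pos h]; exact contOn_log
  · simp only [if_neg h]; exact contOn_powc _ _

lemma divDiff_log_eq {n : ℕ} {y : Fin (n+1) → ℝ} (hy : ∀ i, 0 < y i)
    (hinj : Function.Injective y) :
    divDiff Real.log y = J n (fun _ => 0) (Hlog n 0) y := by
  have hHG := HG n (Flog n) (fun k hk => Flog_der n k hk)
    (fun k _ => Flog_cont n k) y hy hinj
  have hFn : Flog n n = Real.log := by
    funext u; unfold Flog; rw [if_pos rfl]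
  have hF0 : Flog n 0 = Hlog n 0 := by
    funext u; unfold Flog Hlog
    by_cases hn : n = 0
    · rw [if_pos hn.symm, if_pos (by omega)]
    · rw [if_neg (fun hh => hn hh.symm), if_neg (by omega),
        show n-1-0 = n+0-1 by omega, show n-0 = n+0 by omega]
  rw [J_zero, ← hF0, hHG, hFn]

lemma J_pull {n : ℕ} (γ : Fin (n+1) → ℕ) (c a : ℝ) (t : Fin (n+1) → ℝ) :
    J n γ (fun u => c * u ^ a) t = c * J n γ (fun u => u ^ a) t := by
  unfold J
  rw [← MeasureTheory.integral_const_mul]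
  refine integral_congr_ae (Filter.Eventually.of_forall fun s => ?_)
  ring

lemma prod_range_eq_prod_Icc (m : ℕ) (p : ℝ) :
    (∏ i ∈ Finset.range m, (((m:ℕ):ℝ) - p - (i:ℝ))) = ∏ j ∈ Finset.Icc 1 m, ((j:ℝ) - p) := by
  rw [← Finset.Ico_add_one_right_eq_Icc, Finset.prod_Ico_eq_prod_range]
  rw [show m + 1 - 1 = m from rfl]
  rw [← Finset.prod_range_reflect (fun i => ((1+i : ℕ):ℝ) - p) m]
  refine Finset.prod_congr rfl fun i hi => ?_
  have him : i < m := Finset.mem_range.mp hi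
  rw [show 1 + (m - 1 - i) = m - i by omega, Nat.cast_sub (by omega : i ≤ m)]
  ring

end HGaux

theorem stmt6 (n : ℕ) (t : Fin (n + 1) → ℝ) (ht : ∀ j, 0 < t j)
    (htinj : Function.Injective t)
    (α : Fin (n + 1) → ℕ) (hα : ∀ j, 1 ≤ α j) (p : ℝ) (hp : 0 < p) :
    ((∀ j : ℕ, 1 ≤ j → j ≤ (∑ i, α i) - 1 → p ≠ (j : ℝ)) →
      simplexIntegral n (fun s =>
          (∏ j, s j ^ (α j - 1)) * (∑ j, s j * t j) ^ (-p)) =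
        (∏ j ∈ Finset.Icc 1 ((∑ i, α i) - 1), ((j : ℝ) - p))⁻¹ *
          pdMulti (fun j => α j - 1)
            (fun y => divDiff (fun u => u ^ (((∑ i, α i : ℕ) : ℝ) - 1 - p)) y) t)
    ∧
    (2 ≤ ∑ i, α i → p = ((∑ i, α i : ℕ) : ℝ) - 1 →
      simplexIntegral n (fun s =>
          (∏ j, s j ^ (α j - 1)) * (∑ j, s j * t j) ^ (-p)) =
        ((-1 : ℝ) ^ (∑ i, α i) / Real.Gamma p) *
          pdMulti (fun j => α j - 1) (fun y => divDiff Real.log y) t) := by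
  classical
  have htU : t ∈ HGaux.U n := ⟨ht, htinj⟩
  set N := ∑ i, α i with hN
  have hNn : n + 1 ≤ N := by
    rw [hN]
    calc n + 1 = ∑ _i : Fin (n+1), 1 := by simp
    _ ≤ ∑ i, α i := Finset.sum_le_sum fun i _ => hα i
  have hβsum : (∑ i, (α i - 1)) = N - (n+1) := by
    have h1 : (∑ i, (α i - 1)) + (n+1) = N := by
      rw [hN]
      have h2 : (∑ i, (α i - 1)) + (n+1) = ∑ i : Fin (n+1), ((α i - 1) + 1) := by
        rw [Finset.sum_add_distrib]; simp
      rw [h2]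
      exact Finset.sum_congr rfl fun i _ => by have := hα i; omega
    omega
  have hnB : n + (∑ i, (α i - 1)) = N - 1 := by omega
  have hLHS : simplexIntegral n (fun s =>
      (∏ j, s j ^ (α j - 1)) * (∑ j, s j * t j) ^ (-p))
      = HGaux.J n (fun j => α j - 1) (fun u => u ^ (-p)) t := rfl
  constructor
  · intro hne
    set q : ℝ := (N:ℝ) - 1 - p with hq
    have hdd : ∀ y ∈ HGaux.U n,
        (fun y => divDiff (fun u => u ^ q) y) y
          = HGaux.J n (fun _ => 0) (HGaux.Hpow n q 0) y := by
      intro y hy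
      exact HGaux.divDiff_rpow_eq q hy.1 hy.2
    have hmul := HGaux.pdMulti_J (HGaux.Hpow_der n q) (HGaux.Hpow_cont n q)
      (fun j => α j - 1) _ hdd htU
    have hHB : HGaux.Hpow n q (∑ i, (α i - 1))
        = fun u => (∏ j ∈ Finset.Icc 1 (N-1), ((j:ℝ) - p)) * u ^ (-p) := by
      funext u
      unfold HGaux.Hpow
      rw [hnB]
      have e1 : q - ((N-1:ℕ):ℝ) = -p := by
        rw [hq, Nat.cast_sub (by omega : 1 ≤ N)]; push_cast; ring
      rw [e1]
      congr 1
      rw [← HGaux.prod_range_eq_prod_Icc (N-1) p]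
      refine Finset.prod_congr rfl fun i _ => ?_
      rw [hq, Nat.cast_sub (by omega : 1 ≤ N)]
      push_cast
      ring
    have hcne : (∏ j ∈ Finset.Icc 1 (N-1), ((j:ℝ) - p)) ≠ 0 := by
      rw [Finset.prod_ne_zero_iff]
      intro j hj
      rw [Finset.mem_Icc] at hj
      exact sub_ne_zero.mpr fun hh => hne j hj.1 hj.2 hh.symm
    rw [hLHS, hmul, hHB, HGaux.J_pull]
    rw [inv_mul_cancel_left₀ hcne]
  · intro hN2 hpN
    have hdd : ∀ y ∈ HGaux.U n, (fun y => divDiff Real.log y) y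
        = HGaux.J n (fun _ => 0) (HGaux.Hlog n 0) y :=
      fun y hy => HGaux.divDiff_log_eq hy.1 hy.2
    have hmul := HGaux.pdMulti_J (HGaux.Hlog_der n) (HGaux.Hlog_cont n)
      (fun j => α j - 1) _ hdd htU
    have hHB : HGaux.Hlog n (∑ i, (α i - 1))
        = fun u => ((-1:ℝ)^(N-2) * ((N-2).factorial : ℝ)) * u ^ (-p) := by
      funext u
      unfold HGaux.Hlog
      rw [if_neg (by omega), show n + (∑ i, (α i - 1)) - 1 = N - 2 by omega,
        show ((n + (∑ i, (α i - 1)) : ℕ):ℝ) = (N:ℝ) - 1 by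
          rw [hnB, Nat.cast_sub (by omega : 1 ≤ N)]; push_cast; ring,
        hpN]
    have hγ : Real.Gamma p = ((N-2).factorial : ℝ) := by
      rw [hpN, show (N:ℝ) - 1 = ((N-2 : ℕ):ℝ) + 1 by
        rw [Nat.cast_sub (by omega : 2 ≤ N)]; push_cast; ring]
      exact Real.Gamma_nat_eq_factorial (N-2)
    have hsign : (-1:ℝ)^N * (-1:ℝ)^(N-2) = 1 := by
      rw [← pow_add, show N + (N-2) = 2*(N-1) by omega, pow_mul]
      norm_num
    have hfne : ((N-2).factorial : ℝ) ≠ 0 := Nat.cast_ne_zero.mpr (Nat.factorial_ne_zero _)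
    rw [hLHS, hmul, hHB, HGaux.J_pull, hγ]
    set X := HGaux.J n (fun j => α j - 1) (fun u => u ^ (-p)) t
    field_simp
    linear_combination (-X) * hsign
end

section
/- Let a, b, c, d be positive real numbers with ad ≠ bc. Then ∫_0^1 s ds / ((s·a + (1−s)·b)²(s·c + (1−s)·d)) = ( b·c + a·d·( ln((a·d)/(b·c)) − 1 ) ) / ( a · (b·c − a·d)² ). -/
open MeasureTheory

theorem stmt8 (a b c d : ℝ) (ha : 0 < a) (hb : 0 < b) (hc : 0 < c) (hd : 0 < d)
    (h : a * d ≠ b * c) :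
    ∫ s in (0:ℝ)..1,
        s / ((s * a + (1 - s) * b) ^ 2 * (s * c + (1 - s) * d)) =
      (b * c + a * d * (Real.log ((a * d) / (b * c)) - 1)) /
        (a * (b * c - a * d) ^ 2) := by
  have hW : b * c - a * d ≠ 0 := sub_ne_zero.mpr (Ne.symm h)
  have hp : ∀ s : ℝ, s ∈ Set.Icc (0:ℝ) 1 → 0 < s * a + (1 - s) * b := by
    intro s hs
    have h1 : s * min a b ≤ s * a := mul_le_mul_of_nonneg_left (min_le_left a b) hs.1
    have h2 : (1 - s) * min a b ≤ (1 - s) * b :=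
      mul_le_mul_of_nonneg_left (min_le_right a b) (by linarith [hs.2])
    nlinarith [lt_min ha hb]
  have hq : ∀ s : ℝ, s ∈ Set.Icc (0:ℝ) 1 → 0 < s * c + (1 - s) * d := by
    intro s hs
    have h1 : s * min c d ≤ s * c := mul_le_mul_of_nonneg_left (min_le_left c d) hs.1
    have h2 : (1 - s) * min c d ≤ (1 - s) * d :=
      mul_le_mul_of_nonneg_left (min_le_right c d) (by linarith [hs.2])
    nlinarith [lt_min hc hd]
  have huIcc : Set.uIcc (0:ℝ) 1 = Set.Icc (0:ℝ) 1 := Set.uIcc_of_le zero_le_one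
  set F : ℝ → ℝ := fun s =>
    d * (Real.log (s * a + (1 - s) * b) - Real.log (s * c + (1 - s) * d)) / (b * c - a * d) ^ 2
      + s / ((b * c - a * d) * (s * a + (1 - s) * b)) with hF
  have hderiv : ∀ s ∈ Set.uIcc (0:ℝ) 1,
      HasDerivAt F (s / ((s * a + (1 - s) * b) ^ 2 * (s * c + (1 - s) * d))) s := by
    intro s hs
    rw [huIcc] at hs
    have hps := hp s hs
    have hqs := hq s hs
    have hP : HasDerivAt (fun s : ℝ => s * a + (1 - s) * b) (a - b) s := by
      have := ((hasDerivAt_id s).mul_const a).add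
        (((hasDerivAt_const s (1:ℝ)).sub (hasDerivAt_id s)).mul_const b)
      exact this.congr_deriv (by ring)
    have hQ : HasDerivAt (fun s : ℝ => s * c + (1 - s) * d) (c - d) s := by
      have := ((hasDerivAt_id s).mul_const c).add
        (((hasDerivAt_const s (1:ℝ)).sub (hasDerivAt_id s)).mul_const d)
      exact this.congr_deriv (by ring)
    have h1 : HasDerivAt
        (fun s : ℝ => d * (Real.log (s * a + (1 - s) * b) - Real.log (s * c + (1 - s) * d))
          / (b * c - a * d) ^ 2)
        (d * ((a - b) / (s * a + (1 - s) * b) - (c - d) / (s * c + (1 - s) * d))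
          / (b * c - a * d) ^ 2) s :=
      (((hP.log hps.ne').sub (hQ.log hqs.ne')).const_mul d).div_const _
    have h2 : HasDerivAt (fun s : ℝ => s / ((b * c - a * d) * (s * a + (1 - s) * b)))
        ((1 * ((b * c - a * d) * (s * a + (1 - s) * b)) - s * ((b * c - a * d) * (a - b)))
          / ((b * c - a * d) * (s * a + (1 - s) * b)) ^ 2) s :=
      (hasDerivAt_id s).div (hP.const_mul _) (mul_ne_zero hW hps.ne')
    have := h1.add h2
    refine this.congr_deriv ?_
    have hps' : a * s + b * (1 - s) ≠ 0 := by rw [mul_comm a, mul_comm b]; exact hps.ne'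
    have hqs' : s * c + d * (1 - s) ≠ 0 := by rw [mul_comm d]; exact hqs.ne'
    have hW' : b * c - d * a ≠ 0 := by rw [mul_comm d]; exact hW
    field_simp [hps', hqs', hW']
    ring
  have hint : IntervalIntegrable
      (fun s : ℝ => s / ((s * a + (1 - s) * b) ^ 2 * (s * c + (1 - s) * d)))
      volume 0 1 := by
    apply ContinuousOn.intervalIntegrable
    rw [huIcc]
    apply ContinuousOn.div continuousOn_id
    · fun_prop
    · intro s hs
      exact mul_ne_zero (pow_ne_zero _ (hp s hs).ne') (hq s hs).ne'
  rw [intervalIntegral.integral_eq_sub_of_hasDerivAt hderiv hint]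
  have hlog : Real.log ((a * d) / (b * c)) =
      Real.log a + Real.log d - (Real.log b + Real.log c) := by
    rw [Real.log_div (by positivity) (by positivity), Real.log_mul ha.ne' hd.ne',
      Real.log_mul hb.ne' hc.ne']
  rw [hF, hlog]
  simp only
  field_simp
  ring
end

section
/- Let P_0, P_1 be 2×2 real symmetric positive definite matrices with det(P_0 − P_1) = 0. Then ∫_0^1 (det(s P_0 + (1−s) P_1))^{−1/2} ds = 2 / ( √(det P_0) + √(det P_1) ). -/
open MeasureTheory

lemma integral_aux10 (a b : ℝ) (ha : 0 < a) (hb : 0 < b) :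
    ∫ s in (0:ℝ)..1, (Real.sqrt (s * a + (1 - s) * b))⁻¹ =
      2 / (Real.sqrt a + Real.sqrt b) := by
  have hg : ∀ s ∈ Set.uIcc (0:ℝ) 1, 0 < s * a + (1 - s) * b := by
    intro s hs
    rw [Set.uIcc_of_le (by norm_num : (0:ℝ) ≤ 1)] at hs
    obtain ⟨h0, h1⟩ := hs
    nlinarith [mul_le_mul_of_nonneg_left (min_le_left a b) h0,
      mul_le_mul_of_nonneg_left (min_le_right a b) (sub_nonneg.mpr h1), lt_min ha hb]
  rcases eq_or_ne a b with rfl | hab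
  · have : ∀ s : ℝ, s * a + (1 - s) * a = a := fun s => by ring
    simp only [this]
    rw [intervalIntegral.integral_const]
    have hsa : Real.sqrt a ≠ 0 := (Real.sqrt_pos.mpr ha).ne'
    field_simp
    norm_num [hsa]
  · have hab' : a - b ≠ 0 := sub_ne_zero.mpr hab
    have hderiv : ∀ s ∈ Set.uIcc (0:ℝ) 1,
        HasDerivAt (fun t => (2 / (a - b)) * Real.sqrt (t * a + (1 - t) * b))
          ((Real.sqrt (s * a + (1 - s) * b))⁻¹) s := by
      intro s hs
      have hpos := hg s hs
      have h1 : HasDerivAt (fun t : ℝ => t * a + (1 - t) * b) (a - b) s := by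
        have := ((hasDerivAt_id s).mul_const a).add
          (((hasDerivAt_const s (1:ℝ)).sub (hasDerivAt_id s)).mul_const b)
        exact this.congr_deriv (by ring)
      have h2 := (Real.hasDerivAt_sqrt hpos.ne').comp s h1
      have h3 := h2.const_mul (2 / (a - b))
      refine h3.congr_deriv ?_
      have hs' : Real.sqrt (s * a + (1 - s) * b) ≠ 0 := (Real.sqrt_pos.mpr hpos).ne'
      field_simp
    have hcont : ContinuousOn (fun s : ℝ => (Real.sqrt (s * a + (1 - s) * b))⁻¹)
        (Set.uIcc (0:ℝ) 1) := by
      apply ContinuousOn.inv₀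
      · exact (Real.continuous_sqrt.comp (by continuity)).continuousOn
      · intro s hs
        exact (Real.sqrt_pos.mpr (hg s hs)).ne'
    rw [intervalIntegral.integral_eq_sub_of_hasDerivAt hderiv
      (hcont.intervalIntegrable)]
    have hsum : Real.sqrt a + Real.sqrt b ≠ 0 :=
      (add_pos (Real.sqrt_pos.mpr ha) (Real.sqrt_pos.mpr hb)).ne'
    have hsa : Real.sqrt a ^ 2 = a := Real.sq_sqrt ha.le
    have hsb : Real.sqrt b ^ 2 = b := Real.sq_sqrt hb.le
    norm_num
    field_simp
    nlinarith [hsa, hsb]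

theorem stmt10 (P0 P1 : Matrix (Fin 2) (Fin 2) ℝ)
    (h0s : P0.IsSymm) (h0p : P0.PosDef) (h1s : P1.IsSymm) (h1p : P1.PosDef)
    (h : (P0 - P1).det = 0) :
    ∫ s in (0:ℝ)..1, (Real.sqrt ((s • P0 + (1 - s) • P1).det))⁻¹ =
      2 / (Real.sqrt P0.det + Real.sqrt P1.det) := by
  have key : ∀ s : ℝ, (s • P0 + (1 - s) • P1).det = s * P0.det + (1 - s) * P1.det := by
    intro s
    have h' := h
    simp only [Matrix.det_fin_two, Matrix.sub_apply] at h'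
    simp only [Matrix.det_fin_two, Matrix.add_apply, Matrix.smul_apply, smul_eq_mul]
    linear_combination (-(s * (1 - s))) * h'
  simp only [key]
  exact integral_aux10 P0.det P1.det h0p.det_pos h1p.det_pos
end

section
/- For real d ∉ {0, 2} and distinct positive reals x, y, define K_d^t(x,y) = (4 x^{2−3d/4} y^{2−3d/4} / (d(d−2)(x−y)³)) · ((d−1) x^{d/2} y^{d/2−1} − (d−1) x^{d/2−1} y^{d/2} − x^{d−1} + y^{d−1}). Then for every fixed pair of distinct positive reals x, y, the limit of K_d^t(x,y) as the real parameter d tends to 2 (through values d ≠ 2) exists and equals K_2^t(x,y) = −(√x √y /(x−y)³) · ( (x+y) ln(x/y) + 2(y−x) ). -/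
open Real Filter

theorem stmt12 (x y : ℝ) (hx : 0 < x) (hy : 0 < y) (hxy : x ≠ y) :
    Filter.Tendsto
      (fun d : ℝ =>
        (4 * x ^ (2 - 3 * d / 4) * y ^ (2 - 3 * d / 4) /
            (d * (d - 2) * (x - y) ^ 3)) *
          ((d - 1) * x ^ (d / 2) * y ^ (d / 2 - 1) -
            (d - 1) * x ^ (d / 2 - 1) * y ^ (d / 2) -
            x ^ (d - 1) + y ^ (d - 1)))
      (nhdsWithin (2 : ℝ) {(2 : ℝ)}ᶜ)
      (nhds (-(Real.sqrt x * Real.sqrt y / (x - y) ^ 3) *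
        ((x + y) * Real.log (x / y) + 2 * (y - x)))) := by
  have hx0 : x ≠ 0 := hx.ne'
  have hy0 : y ≠ 0 := hy.ne'
  set N : ℝ → ℝ := fun d => (d - 1) * x ^ (d / 2) * y ^ (d / 2 - 1) -
            (d - 1) * x ^ (d / 2 - 1) * y ^ (d / 2) -
            x ^ (d - 1) + y ^ (d - 1) with hN
  have hN2 : N 2 = 0 := by
    simp only [hN]
    norm_num
  -- derivative pieces
  have hhalf : HasDerivAt (fun d : ℝ => d / 2) (1 / 2) 2 := by
    simpa using (hasDerivAt_id (2:ℝ)).div_const 2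
  have hhalf1 : HasDerivAt (fun d : ℝ => d / 2 - 1) (1 / 2) 2 := hhalf.sub_const 1
  have hm1 : HasDerivAt (fun d : ℝ => d - 1) (1 : ℝ) 2 := (hasDerivAt_id (2:ℝ)).sub_const 1
  have hxh : HasDerivAt (fun d : ℝ => x ^ (d / 2)) (x ^ ((2:ℝ)/2) * Real.log x * (1/2)) 2 := by
    exact HasDerivAt.comp 2 ((Real.hasStrictDerivAt_const_rpow hx ((2:ℝ)/2)).hasDerivAt) hhalf
  have hxh1 : HasDerivAt (fun d : ℝ => x ^ (d / 2 - 1)) (x ^ ((2:ℝ)/2 - 1) * Real.log x * (1/2)) 2 := by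
    exact HasDerivAt.comp 2 ((Real.hasStrictDerivAt_const_rpow hx ((2:ℝ)/2 - 1)).hasDerivAt) hhalf1
  have hyh : HasDerivAt (fun d : ℝ => y ^ (d / 2)) (y ^ ((2:ℝ)/2) * Real.log y * (1/2)) 2 := by
    exact HasDerivAt.comp 2 ((Real.hasStrictDerivAt_const_rpow hy ((2:ℝ)/2)).hasDerivAt) hhalf
  have hyh1 : HasDerivAt (fun d : ℝ => y ^ (d / 2 - 1)) (y ^ ((2:ℝ)/2 - 1) * Real.log y * (1/2)) 2 := by
    exact HasDerivAt.comp 2 ((Real.hasStrictDerivAt_const_rpow hy ((2:ℝ)/2 - 1)).hasDerivAt) hhalf1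
  have hxm : HasDerivAt (fun d : ℝ => x ^ (d - 1)) (x ^ ((2:ℝ) - 1) * Real.log x * 1) 2 := by
    exact HasDerivAt.comp 2 ((Real.hasStrictDerivAt_const_rpow hx ((2:ℝ) - 1)).hasDerivAt) hm1
  have hym : HasDerivAt (fun d : ℝ => y ^ (d - 1)) (y ^ ((2:ℝ) - 1) * Real.log y * 1) 2 := by
    exact HasDerivAt.comp 2 ((Real.hasStrictDerivAt_const_rpow hy ((2:ℝ) - 1)).hasDerivAt) hm1
  have hDN : HasDerivAt N
      ((1 * x ^ ((2:ℝ)/2) + ((2:ℝ) - 1) * (x ^ ((2:ℝ)/2) * Real.log x * (1/2))) * y ^ ((2:ℝ)/2 - 1)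
        + (((2:ℝ) - 1) * x ^ ((2:ℝ)/2)) * (y ^ ((2:ℝ)/2 - 1) * Real.log y * (1/2))
       - ((1 * x ^ ((2:ℝ)/2 - 1) + ((2:ℝ) - 1) * (x ^ ((2:ℝ)/2 - 1) * Real.log x * (1/2))) * y ^ ((2:ℝ)/2)
        + (((2:ℝ) - 1) * x ^ ((2:ℝ)/2 - 1)) * (y ^ ((2:ℝ)/2) * Real.log y * (1/2)))
       - x ^ ((2:ℝ) - 1) * Real.log x * 1 + y ^ ((2:ℝ) - 1) * Real.log y * 1) 2 := by
    exact ((((hm1.mul hxh).mul hyh1).sub ((hm1.mul hxh1).mul hyh)).sub hxm).add hym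
  have hslope : Tendsto (slope N 2) (nhdsWithin (2:ℝ) {(2:ℝ)}ᶜ) (nhds _) :=
    hasDerivAt_iff_tendsto_slope.mp hDN
  -- continuous factor
  have hFc : ContinuousAt (fun d : ℝ =>
      4 * x ^ (2 - 3 * d / 4) * y ^ (2 - 3 * d / 4) / (d * (x - y) ^ 3)) 2 := by
    have hX : ContinuousAt (fun d : ℝ => x ^ (2 - 3 * d / 4)) 2 :=
      (Real.continuousAt_const_rpow hx0).comp (by fun_prop)
    have hY : ContinuousAt (fun d : ℝ => y ^ (2 - 3 * d / 4)) 2 :=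
      (Real.continuousAt_const_rpow hy0).comp (by fun_prop)
    exact (((continuousAt_const.mul hX).mul hY).div (continuousAt_id.mul continuousAt_const)
      (by simp [sub_eq_zero, hxy]))
  have hF : Tendsto (fun d : ℝ =>
      4 * x ^ (2 - 3 * d / 4) * y ^ (2 - 3 * d / 4) / (d * (x - y) ^ 3))
      (nhdsWithin (2:ℝ) {(2:ℝ)}ᶜ) (nhds (4 * x ^ (2 - 3 * (2:ℝ) / 4) * y ^ (2 - 3 * (2:ℝ) / 4) / (2 * (x - y) ^ 3))) :=
    (hFc.tendsto).mono_left nhdsWithin_le_nhds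
  have key := hF.mul hslope
  have hval : 4 * x ^ (2 - 3 * (2:ℝ) / 4) * y ^ (2 - 3 * (2:ℝ) / 4) / (2 * (x - y) ^ 3) *
      ((1 * x ^ ((2:ℝ)/2) + ((2:ℝ) - 1) * (x ^ ((2:ℝ)/2) * Real.log x * (1/2))) * y ^ ((2:ℝ)/2 - 1)
        + (((2:ℝ) - 1) * x ^ ((2:ℝ)/2)) * (y ^ ((2:ℝ)/2 - 1) * Real.log y * (1/2))
       - ((1 * x ^ ((2:ℝ)/2 - 1) + ((2:ℝ) - 1) * (x ^ ((2:ℝ)/2 - 1) * Real.log x * (1/2))) * y ^ ((2:ℝ)/2)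
        + (((2:ℝ) - 1) * x ^ ((2:ℝ)/2 - 1)) * (y ^ ((2:ℝ)/2) * Real.log y * (1/2)))
       - x ^ ((2:ℝ) - 1) * Real.log x * 1 + y ^ ((2:ℝ) - 1) * Real.log y * 1)
      = -(Real.sqrt x * Real.sqrt y / (x - y) ^ 3) *
        ((x + y) * Real.log (x / y) + 2 * (y - x)) := by
    rw [show (2 : ℝ) - 3 * 2 / 4 = 1/2 by norm_num,
      show (2 : ℝ) / 2 - 1 = 0 by norm_num, show (2 : ℝ) / 2 = 1 by norm_num,
      show (2 : ℝ) - 1 = 1 by norm_num]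
    simp only [Real.rpow_one, Real.rpow_zero]
    rw [Real.log_div hx0 hy0, Real.sqrt_eq_rpow, Real.sqrt_eq_rpow]
    have h3 : (x - y) ^ 3 ≠ 0 := pow_ne_zero _ (sub_ne_zero.mpr hxy)
    field_simp
    ring
  rw [hval] at key
  refine key.congr' ?_
  have h0 : ∀ᶠ d : ℝ in nhdsWithin (2:ℝ) {(2:ℝ)}ᶜ, d ≠ 0 :=
    nhdsWithin_le_nhds (eventually_ne_nhds (by norm_num : (2:ℝ) ≠ 0))
  filter_upwards [self_mem_nhdsWithin, h0] with d hd hd0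
  have hd2 : d - 2 ≠ 0 := sub_ne_zero.mpr hd
  rw [slope_def_field, hN2, sub_zero]
  simp only [hN]
  rw [div_mul_div_comm, div_mul_eq_mul_div]
  congr 1
  ring
end

section
/- Let d ≥ 1 be an integer with d ≠ 2, and define, for distinct reals t_0, t_1, K_d(t_0,t_1) = K_d^t(e^{−2t_0}, e^{−2t_1}) · (e^{−2t_0} − e^{−2t_1})/(t_0 − t_1), where K_d^t(x,y) = (4 x^{2−3d/4} y^{2−3d/4} / (d(d−2)(x−y)³)) · ((d−1) x^{d/2} y^{d/2−1} − (d−1) x^{d/2−1} y^{d/2} − x^{d−1} + y^{d−1}). Then for every real t, the limit of K_d(t_0,t_1) as (t_0,t_1) → (t,t) (through pairs with t_0 ≠ t_1) exists and equals ((d−1)/3) · e^{(d−2)t}. -/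
open Real Filter

lemma sinh_div_self_tendsto : Tendsto (fun v : ℝ => Real.sinh v / v) (nhdsWithin 0 {0}ᶜ) (nhds 1) := by
  have h := Real.hasDerivAt_sinh 0
  rw [hasDerivAt_iff_tendsto_slope] at h
  simp only [Real.cosh_zero] at h
  refine h.congr (fun v => ?_)
  simp [slope_def_field]

lemma base_lim : Tendsto (fun v : ℝ => (Real.sinh v - v) / v ^ 3) (nhdsWithin 0 {0}ᶜ) (nhds (1/6)) := by
  have hne : ∀ᶠ v in nhdsWithin (0:ℝ) {0}ᶜ, v ≠ 0 :=
    eventually_mem_nhdsWithin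
  -- sinh v / (6 v) → 1/6
  have h2 : Tendsto (fun v : ℝ => Real.sinh v / (6 * v)) (nhdsWithin 0 {0}ᶜ) (nhds (1/6)) := by
    have h := sinh_div_self_tendsto.div_const 6
    refine h.congr (fun v => ?_)
    rw [div_div, mul_comm]
  -- (cosh v - 1)/(3 v^2) → 1/6 by L'Hopital
  have h1 : Tendsto (fun v : ℝ => (Real.cosh v - 1) / (3 * v ^ 2)) (nhdsWithin 0 {0}ᶜ) (nhds (1/6)) := by
    apply HasDerivAt.lhopital_zero_nhdsNE (f' := fun v => Real.sinh v) (g' := fun v => 6 * v)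
    · exact Eventually.of_forall (fun v => (Real.hasDerivAt_cosh v).sub_const 1)
    · refine Eventually.of_forall (fun v => ?_)
      have : HasDerivAt (fun v : ℝ => 3 * v ^ 2) (3 * (2 * v ^ 1)) v :=
        (hasDerivAt_pow 2 v).const_mul 3
      simpa using this.congr_deriv (by ring)
    · filter_upwards [hne] with v hv
      positivity
    · have : Tendsto (fun v : ℝ => Real.cosh v - 1) (nhds 0) (nhds 0) := by
        have := (Real.continuous_cosh.tendsto 0).sub_const 1
        simpa using this
      exact this.mono_left nhdsWithin_le_nhds
    · have : Tendsto (fun v : ℝ => 3 * v ^ 2) (nhds (0:ℝ)) (nhds 0) := by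
        have := ((continuous_pow 2).tendsto (0:ℝ)).const_mul 3
        simpa using this
      exact this.mono_left nhdsWithin_le_nhds
    · exact h2
  apply HasDerivAt.lhopital_zero_nhdsNE (f' := fun v => Real.cosh v - 1) (g' := fun v => 3 * v ^ 2)
  · exact Eventually.of_forall (fun v => (Real.hasDerivAt_sinh v).sub (hasDerivAt_id v))
  · exact Eventually.of_forall (fun v => by simpa using (hasDerivAt_pow 3 v))
  · filter_upwards [hne] with v hv
    positivity
  · have : Tendsto (fun v : ℝ => Real.sinh v - v) (nhds 0) (nhds 0) := by
      have := (Real.continuous_sinh.tendsto 0).sub (continuous_id.tendsto 0)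
      simpa using this
    exact this.mono_left nhdsWithin_le_nhds
  · have : Tendsto (fun v : ℝ => v ^ 3) (nhds (0:ℝ)) (nhds 0) := by
      have := (continuous_pow 3).tendsto (0:ℝ)
      simpa using this
    exact this.mono_left nhdsWithin_le_nhds
  · exact h1

lemma cube_lim (m : ℝ) : Tendsto (fun u : ℝ => (Real.sinh (m * u) - m * u) / u ^ 3)
    (nhdsWithin 0 {0}ᶜ) (nhds (m ^ 3 / 6)) := by
  rcases eq_or_ne m 0 with hm | hm
  · simpa [hm] using (tendsto_const_nhds : Tendsto (fun _ : ℝ => (0:ℝ)) (nhdsWithin 0 {0}ᶜ) (nhds 0))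
  have hne : ∀ᶠ u in nhdsWithin (0:ℝ) {0}ᶜ, u ≠ 0 := eventually_mem_nhdsWithin
  have hcomp : Tendsto (fun u : ℝ => m * u) (nhdsWithin (0:ℝ) {0}ᶜ) (nhdsWithin (0:ℝ) {0}ᶜ) := by
    rw [tendsto_nhdsWithin_iff]
    constructor
    · have := (continuous_mul_left m : Continuous fun u : ℝ => m * u).tendsto 0
      simpa only [mul_zero] using this.mono_left nhdsWithin_le_nhds
    · filter_upwards [hne] with u hu
      simp [hm, hu]
  have h := (base_lim.comp hcomp).const_mul (m ^ 3)
  have heq : ∀ᶠ u in nhdsWithin (0:ℝ) {0}ᶜ,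
      m ^ 3 * ((Real.sinh (m * u) - m * u) / (m * u) ^ 3) = (Real.sinh (m * u) - m * u) / u ^ 3 := by
    filter_upwards [hne] with u hu
    field_simp
  have := h.congr' heq
  rw [div_eq_mul_inv (m ^ 3)]
  simpa [mul_comm] using this

lemma phi_lim (m : ℝ) : Tendsto (fun u : ℝ => (Real.sinh (m * u) - m * Real.sinh u) / (u * Real.sinh u ^ 2))
    (nhdsWithin 0 {0}ᶜ) (nhds ((m ^ 3 - m) / 6)) := by
  have hne : ∀ᶠ u in nhdsWithin (0:ℝ) {0}ᶜ, u ≠ 0 := eventually_mem_nhdsWithin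
  have hinv : Tendsto (fun u : ℝ => u / Real.sinh u) (nhdsWithin 0 {0}ᶜ) (nhds 1) := by
    have := sinh_div_self_tendsto.inv₀ one_ne_zero
    simp only [inv_one] at this
    exact this.congr (fun u => by rw [inv_div])
  have h := ((cube_lim m).sub ((cube_lim 1).const_mul m)).mul ((hinv.mul hinv))
  have heq : ∀ᶠ u in nhdsWithin (0:ℝ) {0}ᶜ,
      ((Real.sinh (m * u) - m * u) / u ^ 3 - m * ((Real.sinh (1 * u) - 1 * u) / u ^ 3)) *
        (u / Real.sinh u * (u / Real.sinh u)) =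
      (Real.sinh (m * u) - m * Real.sinh u) / (u * Real.sinh u ^ 2) := by
    filter_upwards [hne] with u hu
    have hs : Real.sinh u ≠ 0 := Real.sinh_ne_zero.mpr hu
    rw [one_mul]
    field_simp
    ring
  have := h.congr' heq
  have : Tendsto (fun u : ℝ => (Real.sinh (m * u) - m * Real.sinh u) / (u * Real.sinh u ^ 2))
      (nhdsWithin 0 {0}ᶜ) (nhds ((m ^ 3 / 6 - m * (1 ^ 3 / 6)) * (1 * 1))) := this
  convert this using 2
  ring

theorem stmt13 (d : ℕ) (hd1 : 1 ≤ d) (hd2 : d ≠ 2) (t : ℝ) :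
    Filter.Tendsto
      (fun q : ℝ × ℝ =>
        ((4 * Real.exp (-2 * q.1) ^ (2 - 3 * (d : ℝ) / 4) *
              Real.exp (-2 * q.2) ^ (2 - 3 * (d : ℝ) / 4) /
            ((d : ℝ) * ((d : ℝ) - 2) *
              (Real.exp (-2 * q.1) - Real.exp (-2 * q.2)) ^ 3)) *
          (((d : ℝ) - 1) * Real.exp (-2 * q.1) ^ ((d : ℝ) / 2) *
              Real.exp (-2 * q.2) ^ ((d : ℝ) / 2 - 1) -
            ((d : ℝ) - 1) * Real.exp (-2 * q.1) ^ ((d : ℝ) / 2 - 1) *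
              Real.exp (-2 * q.2) ^ ((d : ℝ) / 2) -
            Real.exp (-2 * q.1) ^ ((d : ℝ) - 1) +
            Real.exp (-2 * q.2) ^ ((d : ℝ) - 1))) *
          ((Real.exp (-2 * q.1) - Real.exp (-2 * q.2)) / (q.1 - q.2)))
      (nhdsWithin (t, t) {q : ℝ × ℝ | q.1 ≠ q.2})
      (nhds (((d : ℝ) - 1) / 3 * Real.exp (((d : ℝ) - 2) * t))) := by
  have hd0 : (d : ℝ) ≠ 0 := Nat.cast_ne_zero.mpr (by omega)
  have hdd2 : (d : ℝ) - 2 ≠ 0 := by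
    intro h
    apply hd2
    have : (d : ℝ) = 2 := by linarith
    exact_mod_cast this
  set G : ℝ × ℝ → ℝ := fun q =>
    2 / ((d : ℝ) * ((d : ℝ) - 2)) * Real.exp ((1 - (d : ℝ) / 2) * (-(q.1 + q.2))) *
      ((Real.sinh (((d : ℝ) - 1) * (q.1 - q.2)) - ((d : ℝ) - 1) * Real.sinh (q.1 - q.2)) /
        ((q.1 - q.2) * Real.sinh (q.1 - q.2) ^ 2)) with hG
  have hGlim : Tendsto G (nhdsWithin (t, t) {q : ℝ × ℝ | q.1 ≠ q.2})
      (nhds (((d : ℝ) - 1) / 3 * Real.exp (((d : ℝ) - 2) * t))) := by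
    have hexp : Tendsto (fun q : ℝ × ℝ => 2 / ((d : ℝ) * ((d : ℝ) - 2)) *
        Real.exp ((1 - (d : ℝ) / 2) * (-(q.1 + q.2))))
        (nhdsWithin (t, t) {q : ℝ × ℝ | q.1 ≠ q.2})
        (nhds (2 / ((d : ℝ) * ((d : ℝ) - 2)) * Real.exp ((1 - (d : ℝ) / 2) * (-(t + t))))) := by
      have hc : Continuous fun q : ℝ × ℝ => 2 / ((d : ℝ) * ((d : ℝ) - 2)) *
          Real.exp ((1 - (d : ℝ) / 2) * (-(q.1 + q.2))) := by
        continuity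
      exact (hc.tendsto (t, t)).mono_left nhdsWithin_le_nhds
    have hsub : Tendsto (fun q : ℝ × ℝ => q.1 - q.2)
        (nhdsWithin (t, t) {q : ℝ × ℝ | q.1 ≠ q.2}) (nhdsWithin 0 {0}ᶜ) := by
      rw [tendsto_nhdsWithin_iff]
      constructor
      · have hc : Continuous fun q : ℝ × ℝ => q.1 - q.2 := by continuity
        exact Tendsto.mono_left (by simpa using hc.tendsto ((t, t) : ℝ × ℝ)) nhdsWithin_le_nhds
      · filter_upwards [eventually_mem_nhdsWithin] with q hq
        exact sub_ne_zero.mpr hq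
    have h := hexp.mul ((phi_lim ((d : ℝ) - 1)).comp hsub)
    have hval : 2 / ((d : ℝ) * ((d : ℝ) - 2)) * Real.exp ((1 - (d : ℝ) / 2) * (-(t + t))) *
        ((((d : ℝ) - 1) ^ 3 - ((d : ℝ) - 1)) / 6) =
        ((d : ℝ) - 1) / 3 * Real.exp (((d : ℝ) - 2) * t) := by
      rw [show (1 - (d : ℝ) / 2) * (-(t + t)) = ((d : ℝ) - 2) * t by ring]
      field_simp
      ring
    rw [hG]
    simp only [Function.comp_def] at h
    rw [← hval]
    exact h
  refine tendsto_nhdsWithin_congr (fun q hq => ?_) hGlim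
  obtain ⟨t0, t1⟩ := q
  simp only [Set.mem_setOf_eq] at hq
  simp only [hG]
  have hu0 : t0 - t1 ≠ 0 := sub_ne_zero.mpr hq
  have hS : Real.sinh (t0 - t1) ≠ 0 := Real.sinh_ne_zero.mpr hu0
  have hXY : Real.exp (-2 * t0) - Real.exp (-2 * t1) =
      -2 * Real.exp (-(t0 + t1)) * Real.sinh (t0 - t1) := by
    rw [show (-2 * t0) = -(t0 + t1) + -(t0 - t1) by ring,
        show (-2 * t1) = -(t0 + t1) + (t0 - t1) by ring,
        Real.exp_add, Real.exp_add, Real.sinh_eq]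
    ring
  simp only [← Real.exp_mul]
  rw [hXY]
  have e1 : Real.exp (-2 * t0 * ((d : ℝ) / 2)) * Real.exp (-2 * t1 * ((d : ℝ) / 2 - 1)) =
      Real.exp (((d : ℝ) - 1) * (-(t0 + t1))) * Real.exp (-(t0 - t1)) := by
    rw [← Real.exp_add, ← Real.exp_add, Real.exp_eq_exp]; ring
  have e2 : Real.exp (-2 * t0 * ((d : ℝ) / 2 - 1)) * Real.exp (-2 * t1 * ((d : ℝ) / 2)) =
      Real.exp (((d : ℝ) - 1) * (-(t0 + t1))) * Real.exp (t0 - t1) := by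
    rw [← Real.exp_add, ← Real.exp_add, Real.exp_eq_exp]; ring
  have e3 : Real.exp (-2 * t0 * ((d : ℝ) - 1)) =
      Real.exp (((d : ℝ) - 1) * (-(t0 + t1))) * Real.exp (-(((d : ℝ) - 1) * (t0 - t1))) := by
    rw [← Real.exp_add, Real.exp_eq_exp]; ring
  have e4 : Real.exp (-2 * t1 * ((d : ℝ) - 1)) =
      Real.exp (((d : ℝ) - 1) * (-(t0 + t1))) * Real.exp (((d : ℝ) - 1) * (t0 - t1)) := by
    rw [← Real.exp_add, Real.exp_eq_exp]; ring
  have hB : ((d : ℝ) - 1) * Real.exp (-2 * t0 * ((d : ℝ) / 2)) *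
        Real.exp (-2 * t1 * ((d : ℝ) / 2 - 1)) -
      ((d : ℝ) - 1) * Real.exp (-2 * t0 * ((d : ℝ) / 2 - 1)) *
        Real.exp (-2 * t1 * ((d : ℝ) / 2)) -
      Real.exp (-2 * t0 * ((d : ℝ) - 1)) + Real.exp (-2 * t1 * ((d : ℝ) - 1)) =
      Real.exp (((d : ℝ) - 1) * (-(t0 + t1))) *
        (2 * Real.sinh (((d : ℝ) - 1) * (t0 - t1)) -
          2 * ((d : ℝ) - 1) * Real.sinh (t0 - t1)) := by
    rw [Real.sinh_eq (((d : ℝ) - 1) * (t0 - t1)), Real.sinh_eq (t0 - t1)]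
    linear_combination ((d : ℝ) - 1) * e1 - ((d : ℝ) - 1) * e2 - e3 + e4
  rw [hB]
  have eQ : Real.exp ((1 - (d : ℝ) / 2) * (-(t0 + t1))) =
      Real.exp (-2 * t0 * (2 - 3 * (d : ℝ) / 4)) * Real.exp (-2 * t1 * (2 - 3 * (d : ℝ) / 4)) *
        Real.exp (((d : ℝ) - 1) * (-(t0 + t1))) / Real.exp (-(t0 + t1)) ^ 2 := by
    rw [eq_div_iff (by positivity), sq, ← Real.exp_add, ← Real.exp_add, ← Real.exp_add,
        ← Real.exp_add, Real.exp_eq_exp]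
    ring
  rw [eQ]
  have hA : Real.exp (-(t0 + t1)) ≠ 0 := Real.exp_ne_zero _
  field_simp
  ring
end
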